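/- arXiv:2004.05963 — 10 statements merged into one kernel-verified Lean document; each statement's English description precedes it below -/
import Mathlib

section
/- Let n ≥ 1, let f : ℝⁿ → ℝ be convex and Lipschitz with constant D̂ ≥ 0, and let μ be the uniform probability measure on the closed Euclidean ball of radius √(n+2) centered at the origin in ℝⁿ. For β > 0 define the smoothed function f_β(x) = ∫ f(x + βξ) dμ(ξ). Then for every x ∈ ℝⁿ one has f(x) ≤ f_β(x) ≤ f(x) + β·D̂·√(n+2). -/
open MeasureTheory Metric

/-- Lemma 1-(1) (Duchi et al.): the uniform smoothing of a convex `D`-Lipschitz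
function over the ball of radius `√(n+2)` satisfies
`f x ≤ f_β x ≤ f x + β * D * √(n+2)`. -/
theorem stmt_0 (n : ℕ) (hn : 1 ≤ n)
    (f : EuclideanSpace ℝ (Fin n) → ℝ)
    (D : ℝ) (hD : 0 ≤ D)
    (hconv : ConvexOn ℝ Set.univ f)
    (hlip : ∀ x y, |f x - f y| ≤ D * ‖x - y‖)
    (μ : Measure (EuclideanSpace ℝ (Fin n)))
    (hμ : μ = (volume (closedBall (0 : EuclideanSpace ℝ (Fin n)) (Real.sqrt (n + 2))))⁻¹ •
        volume.restrict (closedBall (0 : EuclideanSpace ℝ (Fin n)) (Real.sqrt (n + 2))))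
    (β : ℝ) (hβ : 0 < β) (x : EuclideanSpace ℝ (Fin n)) :
    f x ≤ ∫ ξ, f (x + β • ξ) ∂μ ∧
      ∫ ξ, f (x + β • ξ) ∂μ ≤ f x + β * D * Real.sqrt (n + 2) := by
  set r : ℝ := Real.sqrt (n + 2) with hr_def
  have hr : 0 < r := Real.sqrt_pos.2 (by positivity)
  set B := closedBall (0 : EuclideanSpace ℝ (Fin n)) r with hB_def
  have hB0 : volume B ≠ 0 := (measure_closedBall_pos volume 0 hr).ne'
  have hBtop : volume B ≠ ⊤ := (measure_closedBall_lt_top).ne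
  have hprob : IsProbabilityMeasure μ := by
    rw [hμ]
    constructor
    simp [Measure.restrict_apply, ENNReal.inv_mul_cancel hB0 hBtop]
  -- f is Lipschitz continuous
  have hlipW : LipschitzWith D.toNNReal f := by
    apply LipschitzWith.of_dist_le_mul
    intro a b
    simpa [Real.dist_eq, dist_eq_norm, Real.coe_toNNReal _ hD] using hlip a b
  have hfc : Continuous f := hlipW.continuous
  have hcont : Continuous (fun ξ : EuclideanSpace ℝ (Fin n) => f (x + β • ξ)) := by
    fun_prop
  -- integrability
  have hint : Integrable (fun ξ => f (x + β • ξ)) μ := by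
    rw [hμ]
    exact (hcont.continuousOn.integrableOn_compact (isCompact_closedBall _ _)).smul_measure
      (by simpa using ENNReal.inv_ne_top.2 hB0)
  have hint_id : Integrable (fun ξ : EuclideanSpace ℝ (Fin n) => ξ) μ := by
    rw [hμ]
    exact ((continuous_id : Continuous (fun ξ : EuclideanSpace ℝ (Fin n) => ξ)).continuousOn.integrableOn_compact (isCompact_closedBall _ _)).smul_measure
      (by simpa using ENNReal.inv_ne_top.2 hB0)
  -- mean of μ is zero
  have hae : ∀ᵐ ξ ∂μ, ξ ∈ B := by
    rw [hμ]
    exact Measure.ae_smul_measure (ae_restrict_mem measurableSet_closedBall) _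
  have hneg : μ.map (fun ξ => -ξ) = μ := by
    rw [hμ, Measure.map_smul]
    congr 1
    have h1 : (fun ξ : EuclideanSpace ℝ (Fin n) => -ξ) ⁻¹' B = B := by
      ext y; simp [hB_def]
    conv_lhs => rw [← h1]
    rw [← Measure.restrict_map measurable_neg measurableSet_closedBall,
      Measure.map_neg_eq_self]
  have hmean : (∫ ξ, ξ ∂μ) = 0 := by
    have h1 : (∫ ξ, ξ ∂μ) = ∫ ξ, -ξ ∂μ := by
      conv_lhs => rw [← hneg]
      rw [integral_map measurable_neg.aemeasurable]
      exact aestronglyMeasurable_id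
    have h2 : (∫ ξ, -ξ ∂μ) = -∫ ξ, ξ ∂μ := integral_neg _
    have h3 := h1.trans h2
    have h4 : (2 : ℝ) • (∫ ξ, ξ ∂μ) = 0 := by
      rw [two_smul]; nth_rewrite 1 [h3]; simp
    simpa using (smul_eq_zero.1 h4).resolve_left (by norm_num)
  -- Jensen / lower bound
  have hsm : Integrable (fun ξ : EuclideanSpace ℝ (Fin n) => β • ξ) μ := hint_id.smul β
  have hin2 : Integrable (fun ξ : EuclideanSpace ℝ (Fin n) => x + β • ξ) μ :=
    (integrable_const x).add hsm
  have hmean' : (∫ ξ, (x + β • ξ) ∂μ) = x := by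
    rw [integral_add (integrable_const x) hsm, integral_smul, hmean, integral_const]
    simp
  constructor
  · have hjen := hconv.map_integral_le (hfc.continuousOn) isClosed_univ
      (Filter.Eventually.of_forall fun ξ => Set.mem_univ _)
      hin2 (by exact hint)
    rwa [hmean'] at hjen
  · have hub : ∀ᵐ ξ ∂μ, f (x + β • ξ) ≤ f x + β * D * r := by
      filter_upwards [hae] with ξ hξ
      have h1 : f (x + β • ξ) - f x ≤ D * ‖x + β • ξ - x‖ :=
        (abs_le.1 (hlip (x + β • ξ) x)).2
      have h2 : ‖x + β • ξ - x‖ = β * ‖ξ‖ := by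
        rw [add_sub_cancel_left, norm_smul, Real.norm_eq_abs, abs_of_pos hβ]
      have h3 : ‖ξ‖ ≤ r := by simpa [hB_def, dist_eq_norm] using hξ
      rw [h2] at h1
      nlinarith [mul_le_mul_of_nonneg_left h3 (mul_nonneg hD hβ.le)]
    calc ∫ ξ, f (x + β • ξ) ∂μ ≤ ∫ _ξ, (f x + β * D * r) ∂μ :=
          integral_mono_ae hint (integrable_const _) hub
      _ = f x + β * D * r := by simp
end

section
/- Let N ≥ 1, n ≥ 1, and let A be a 2N×2N real column stochastic matrix (every column sums to 1). Let M be the 2N×2N matrix whose first N rows have all entries equal to 1/N and whose last N rows are zero, and suppose there exist Γ > 0 and γ ∈ (0,1) such that |(A^k)_{ij} − M_{ij}| ≤ Γγ^k for all k ≥ 1 and all i,j. Let g : ℕ → (Fin 2N → ℝⁿ) satisfy g_k^i = 0 for all N+1 ≤ i ≤ 2N and all k, and let z : ℕ → (Fin 2N → ℝⁿ) satisfy the recursion z_{k+1}^i = Σ_{j=1}^{2N} A_{ij} z_k^j + g_k^i. Set ς = max_{1 ≤ i ≤ 2N} ‖z_0^i‖, G_k = Σ_{j=1}^{N} ‖g_k^j‖,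 and z̄_k = (1/N) Σ_{i=1}^{2N} z_k^i. Then for all k ≥ 1 and all 1 ≤ i ≤ N: ‖z_k^i − z̄_k‖ ≤ 2NςΓγ^k + Γ Σ_{r=1}^{k−1} γ^{k−r} G_{r−1} + G_{k−1}. -/
open Finset

set_option maxHeartbeats 1000000

lemma aux_mul_smul {ι : Type*} [Fintype ι] {E : Type*} [AddCommGroup E] [Module ℝ E]
    (A B : Matrix ι ι ℝ) (w : ι → E) (i : ι) :
    ∑ j, A i j • ∑ l, B j l • w l = ∑ l, (A * B) i l • w l := by
  simp_rw [Finset.smul_sum, smul_smul, Matrix.mul_apply, Finset.sum_smul]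
  exact Finset.sum_comm

/-- Lemma 3-(1): consensus bound `‖z_k^i − z̄_k‖ ≤ 2NςΓγ^k + Γ Σ_{r=1}^{k−1} γ^{k−r} G_{r−1} + G_{k−1}`
for the first `N` coordinates of the augmented dynamics `z_{k+1} = A z_k + g_k`. -/
theorem stmt_2 (N n : ℕ) (hN : 1 ≤ N) (hn : 1 ≤ n)
    (A : Matrix (Fin (2 * N)) (Fin (2 * N)) ℝ)
    (hcol : ∀ j, ∑ i, A i j = 1)
    (Γ γ : ℝ) (hΓ : 0 < Γ) (hγ : γ ∈ Set.Ioo (0 : ℝ) 1)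
    (hA : ∀ k : ℕ, 1 ≤ k → ∀ i j : Fin (2 * N),
      |(A ^ k) i j - (if (i : ℕ) < N then (N : ℝ)⁻¹ else 0)| ≤ Γ * γ ^ k)
    (g z : ℕ → Fin (2 * N) → EuclideanSpace ℝ (Fin n))
    (hg : ∀ k : ℕ, ∀ i : Fin (2 * N), N ≤ (i : ℕ) → g k i = 0)
    (hz : ∀ k : ℕ, ∀ i : Fin (2 * N), z (k + 1) i = (∑ j, A i j • z k j) + g k i)
    (ς : ℝ) (hς : IsGreatest (Set.range fun i : Fin (2 * N) => ‖z 0 i‖) ς)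
    (G : ℕ → ℝ)
    (hG : ∀ k, G k = ∑ j ∈ univ.filter (fun j : Fin (2 * N) => (j : ℕ) < N), ‖g k j‖)
    (zbar : ℕ → EuclideanSpace ℝ (Fin n))
    (hzbar : ∀ k, zbar k = (N : ℝ)⁻¹ • ∑ i, z k i) :
    ∀ k : ℕ, 1 ≤ k → ∀ i : Fin (2 * N), (i : ℕ) < N →
      ‖z k i - zbar k‖ ≤ 2 * N * ς * Γ * γ ^ k
        + Γ * ∑ r ∈ Icc 1 (k - 1), γ ^ (k - r) * G (r - 1) + G (k - 1) := by
  have hγ0 : 0 < γ := hγ.1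
  have hN0 : (0:ℝ) < N := by exact_mod_cast hN
  have hNinv0 : (0:ℝ) ≤ (N:ℝ)⁻¹ := by positivity
  have hNinv1 : (N:ℝ)⁻¹ ≤ 1 := by
    rw [inv_le_one_iff₀]; right; exact_mod_cast hN
  -- closed form for z
  have key : ∀ m, ∀ i : Fin (2*N), z m i
      = (∑ j, (A ^ m) i j • z 0 j)
        + ∑ r ∈ Finset.range m, ∑ j, (A ^ r) i j • g (m - 1 - r) j := by
    intro m
    induction m with
    | zero => intro i; simp [Matrix.one_apply]
    | succ m ih =>
      intro i
      rw [hz m i]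
      have h1 : ∀ j, z m j = (∑ l, (A ^ m) j l • z 0 l)
          + ∑ r ∈ Finset.range m, ∑ l, (A ^ r) j l • g (m - 1 - r) l := ih
      calc (∑ j, A i j • z m j) + g m i
          = ((∑ j, A i j • ∑ l, (A ^ m) j l • z 0 l)
            + (∑ r ∈ Finset.range m, ∑ j, A i j • ∑ l, (A ^ r) j l • g (m - 1 - r) l))
            + g m i := by
            congr 1
            simp_rw [h1, smul_add, Finset.sum_add_distrib, Finset.smul_sum]
            congr 1
            exact Finset.sum_comm
        _ = ((∑ j, (A ^ (m+1)) i j • z 0 j)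
            + ∑ r ∈ Finset.range m, ∑ j, (A ^ (r+1)) i j • g (m - 1 - r) j)
            + g m i := by
            simp_rw [aux_mul_smul, pow_succ']
        _ = (∑ j, (A ^ (m+1)) i j • z 0 j)
            + ∑ r ∈ Finset.range (m+1), ∑ j, (A ^ r) i j • g (m + 1 - 1 - r) j := by
            rw [Finset.sum_range_succ' (fun r => ∑ j, (A ^ r) i j • g (m + 1 - 1 - r) j)]
            have e0 : (∑ j, (A ^ 0) i j • g (m + 1 - 1 - 0) j) = g m i := by
              simp [Matrix.one_apply]
            rw [e0, add_assoc]
            congr 2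
            refine Finset.sum_congr rfl fun r _ => ?_
            refine Finset.sum_congr rfl fun j _ => ?_
            rw [show m + 1 - 1 - (r + 1) = m - 1 - r from by omega]
  -- closed form for zbar
  have colsum : ∀ m, ∑ i, z (m+1) i = (∑ i, z m i) + ∑ j, g m j := by
    intro m
    simp_rw [hz m, Finset.sum_add_distrib]
    congr 1
    rw [Finset.sum_comm]
    refine Finset.sum_congr rfl fun j _ => ?_
    rw [← Finset.sum_smul, hcol j, one_smul]
  have zbarform : ∀ m, zbar m = (∑ j, ((N:ℝ)⁻¹) • z 0 j)
      + ∑ r ∈ Finset.range m, ∑ j, ((N:ℝ)⁻¹) • g (m - 1 - r) j := by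
    intro m
    have base : ∑ i, z m i = (∑ j, z 0 j) + ∑ r ∈ Finset.range m, ∑ j, g r j := by
      induction m with
      | zero => simp
      | succ m ih => rw [colsum m, ih, Finset.sum_range_succ]; abel
    rw [hzbar, base, smul_add, Finset.smul_sum, Finset.smul_sum]
    congr 1
    rw [← Finset.sum_range_reflect (fun r => (N:ℝ)⁻¹ • ∑ j, g r j) m]
    refine Finset.sum_congr rfl fun r hr => ?_
    rw [Finset.smul_sum]
  -- the difference
  intro k hk i hi
  have diff : z k i - zbar k
      = (∑ j, ((A ^ k) i j - (N:ℝ)⁻¹) • z 0 j)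
        + ∑ r ∈ Finset.range k, ∑ j, ((A ^ r) i j - (N:ℝ)⁻¹) • g (k - 1 - r) j := by
    rw [key k i, zbarform k]
    simp_rw [sub_smul, Finset.sum_sub_distrib]
    abel
  rw [diff]
  -- the row bound hA specialized
  have hAi : ∀ m : ℕ, 1 ≤ m → ∀ j, |(A ^ m) i j - (N:ℝ)⁻¹| ≤ Γ * γ ^ m := by
    intro m hm j
    have := hA m hm i j
    simpa [hi] using this
  -- bounds on initial data
  have hz0 : ∀ j, ‖z 0 j‖ ≤ ς := fun j => hς.2 ⟨j, rfl⟩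
  have hς0 : 0 ≤ ς := le_trans (norm_nonneg _) (hz0 ⟨0, by omega⟩)
  -- G nonneg
  have hGnn : ∀ r, 0 ≤ G r := by
    intro r; rw [hG]; exact Finset.sum_nonneg fun j _ => norm_nonneg _
  -- bound first term
  have bndA : ‖∑ j, ((A ^ k) i j - (N:ℝ)⁻¹) • z 0 j‖ ≤ 2 * N * ς * Γ * γ ^ k := by
    calc ‖∑ j, ((A ^ k) i j - (N:ℝ)⁻¹) • z 0 j‖
        ≤ ∑ j, ‖((A ^ k) i j - (N:ℝ)⁻¹) • z 0 j‖ := norm_sum_le _ _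
      _ ≤ ∑ j : Fin (2*N), (Γ * γ ^ k) * ς := by
          refine Finset.sum_le_sum fun j _ => ?_
          rw [norm_smul, Real.norm_eq_abs]
          exact mul_le_mul (hAi k hk j) (hz0 j) (norm_nonneg _)
            (by positivity)
      _ = 2 * N * ς * Γ * γ ^ k := by
          rw [Finset.sum_const, Finset.card_univ]
          simp [Fintype.card_fin]
          ring
  -- per-row sum bound for the g terms
  have rowg : ∀ (c : Fin (2*N) → ℝ) (b : ℝ) (m : ℕ), (∀ j, |c j| ≤ b) →
      ∑ j, ‖c j • g m j‖ ≤ b * G m := by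
    intro c b m hc
    rw [hG, Finset.mul_sum]
    rw [← Finset.sum_filter_add_sum_filter_not univ (fun j : Fin (2*N) => (j:ℕ) < N)]
    have h2 : ∑ j ∈ univ.filter (fun j : Fin (2*N) => ¬ (j:ℕ) < N), ‖c j • g m j‖ = 0 := by
      refine Finset.sum_eq_zero fun j hj => ?_
      rw [hg m j (by simpa using (Finset.mem_filter.mp hj).2)]
      simp
    rw [h2, add_zero]
    refine Finset.sum_le_sum fun j _ => ?_
    rw [norm_smul, Real.norm_eq_abs]
    exact mul_le_mul_of_nonneg_right (hc j) (norm_nonneg _)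
  -- bound the g sum
  have bndB : ∑ r ∈ Finset.range k, ‖∑ j, ((A ^ r) i j - (N:ℝ)⁻¹) • g (k - 1 - r) j‖
      ≤ G (k-1) + ∑ r ∈ Finset.Ico 1 k, Γ * γ ^ r * G (k - 1 - r) := by
    have h0 : ‖∑ j, ((A ^ (0:ℕ)) i j - (N:ℝ)⁻¹) • g (k - 1 - 0) j‖ ≤ G (k - 1) := by
      have hb : ∀ j : Fin (2*N), |(A ^ (0:ℕ)) i j - (N:ℝ)⁻¹| ≤ 1 := by
        intro j
        rw [pow_zero, Matrix.one_apply]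
        by_cases h : i = j
        · rw [if_pos h, abs_of_nonneg (by linarith)]; linarith
        · rw [if_neg h, zero_sub, abs_neg, abs_of_nonneg hNinv0]; linarith
      calc ‖∑ j, ((A ^ (0:ℕ)) i j - (N:ℝ)⁻¹) • g (k - 1 - 0) j‖
          ≤ ∑ j, ‖((A ^ (0:ℕ)) i j - (N:ℝ)⁻¹) • g (k - 1 - 0) j‖ := norm_sum_le _ _
        _ ≤ 1 * G (k - 1 - 0) := rowg _ 1 (k - 1 - 0) hb
        _ = G (k - 1) := by rw [one_mul, Nat.sub_zero]
    have h1 : ∀ r ∈ Finset.Ico 1 k, ‖∑ j, ((A ^ r) i j - (N:ℝ)⁻¹) • g (k - 1 - r) j‖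
        ≤ Γ * γ ^ r * G (k - 1 - r) := by
      intro r hr
      have hr1 : 1 ≤ r := (Finset.mem_Ico.mp hr).1
      calc ‖∑ j, ((A ^ r) i j - (N:ℝ)⁻¹) • g (k - 1 - r) j‖
          ≤ ∑ j, ‖((A ^ r) i j - (N:ℝ)⁻¹) • g (k - 1 - r) j‖ := norm_sum_le _ _
        _ ≤ (Γ * γ ^ r) * G (k - 1 - r) := rowg _ _ _ (hAi r hr1)
    rw [Finset.range_eq_Ico, Finset.sum_eq_sum_Ico_succ_bot hk]
    exact add_le_add h0 (Finset.sum_le_sum h1)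
  -- reindex
  have reidx : ∑ r ∈ Finset.Ico 1 k, Γ * γ ^ r * G (k - 1 - r)
      = Γ * ∑ r ∈ Finset.Icc 1 (k-1), γ ^ (k - r) * G (r - 1) := by
    have hIcc : Finset.Icc 1 (k-1) = Finset.Ico 1 k := by
      rw [← Finset.Ico_add_one_right_eq_Icc]
      congr 1
      omega
    rw [hIcc, Finset.mul_sum]
    refine Finset.sum_nbij' (fun r => k - r) (fun r => k - r) ?_ ?_ ?_ ?_ ?_
    · intro a ha; simp only [Finset.mem_Ico] at *; omega
    · intro a ha; simp only [Finset.mem_Ico] at *; omega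
    · intro a ha; simp only [Finset.mem_Ico] at ha; show k - (k - a) = a; omega
    · intro a ha; simp only [Finset.mem_Ico] at ha; show k - (k - a) = a; omega
    · intro a ha
      simp only [Finset.mem_Ico] at ha
      have e1 : k - (k - a) = a := by omega
      have e2 : (k - a) - 1 = k - 1 - a := by omega
      rw [e1, e2]
      ring
  calc ‖(∑ j, ((A ^ k) i j - (N:ℝ)⁻¹) • z 0 j)
        + ∑ r ∈ Finset.range k, ∑ j, ((A ^ r) i j - (N:ℝ)⁻¹) • g (k - 1 - r) j‖
      ≤ ‖∑ j, ((A ^ k) i j - (N:ℝ)⁻¹) • z 0 j‖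
        + ∑ r ∈ Finset.range k, ‖∑ j, ((A ^ r) i j - (N:ℝ)⁻¹) • g (k - 1 - r) j‖ := by
        exact le_trans (norm_add_le _ _) (by gcongr; exact norm_sum_le _ _)
    _ ≤ 2 * N * ς * Γ * γ ^ k + (G (k-1) + ∑ r ∈ Finset.Ico 1 k, Γ * γ ^ r * G (k - 1 - r)) :=
        add_le_add bndA bndB
    _ = 2 * N * ς * Γ * γ ^ k
        + Γ * ∑ r ∈ Icc 1 (k - 1), γ ^ (k - r) * G (r - 1) + G (k - 1) := by
        rw [reidx]; ring
end

section
/- Let N ≥ 1, n ≥ 1, and let A be a 2N×2N real column stochastic matrix (every column sums to 1). Let M be the 2N×2N matrix whose first N rows have all entries equal to 1/N and whose last N rows are zero, and suppose there exist Γ > 0 and γ ∈ (0,1) such that |(A^k)_{ij} − M_{ij}| ≤ Γγ^k for all k ≥ 1 and all i,j. Let g : ℕ → (Fin 2N → ℝⁿ) satisfy g_k^i = 0 for all N+1 ≤ i ≤ 2N and all k, and let z : ℕ → (Fin 2N → ℝⁿ) satisfy the recursion z_{k+1}^i = Σ_{j=1}^{2N} A_{ij} z_k^j + g_k^i. Set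 ς = max_{1 ≤ i ≤ 2N} ‖z_0^i‖ and G_k = Σ_{j=1}^{N} ‖g_k^j‖. Then for all k ≥ 1 and all N+1 ≤ i ≤ 2N: ‖z_k^i‖ ≤ 2NςΓγ^k + Γ Σ_{r=1}^{k−1} γ^{k−r} G_{r−1}. -/
open Finset

/-- Lemma 3-(2): surplus bound `‖y_k^i‖ ≤ 2NςΓγ^k + Γ Σ_{r=1}^{k−1} γ^{k−r} G_{r−1}`
for the last `N` coordinates of the augmented dynamics `z_{k+1} = A z_k + g_k`. -/
theorem stmt_3 (N n : ℕ) (hN : 1 ≤ N) (hn : 1 ≤ n)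
    (A : Matrix (Fin (2 * N)) (Fin (2 * N)) ℝ)
    (hcol : ∀ j, ∑ i, A i j = 1)
    (Γ γ : ℝ) (hΓ : 0 < Γ) (hγ : γ ∈ Set.Ioo (0 : ℝ) 1)
    (hA : ∀ k : ℕ, 1 ≤ k → ∀ i j : Fin (2 * N),
      |(A ^ k) i j - (if (i : ℕ) < N then (N : ℝ)⁻¹ else 0)| ≤ Γ * γ ^ k)
    (g z : ℕ → Fin (2 * N) → EuclideanSpace ℝ (Fin n))
    (hg : ∀ k : ℕ, ∀ i : Fin (2 * N), N ≤ (i : ℕ) → g k i = 0)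
    (hz : ∀ k : ℕ, ∀ i : Fin (2 * N), z (k + 1) i = (∑ j, A i j • z k j) + g k i)
    (ς : ℝ) (hς : IsGreatest (Set.range fun i : Fin (2 * N) => ‖z 0 i‖) ς)
    (G : ℕ → ℝ)
    (hG : ∀ k, G k = ∑ j ∈ univ.filter (fun j : Fin (2 * N) => (j : ℕ) < N), ‖g k j‖) :
    ∀ k : ℕ, 1 ≤ k → ∀ i : Fin (2 * N), N ≤ (i : ℕ) →
      ‖z k i‖ ≤ 2 * N * ς * Γ * γ ^ k
        + Γ * ∑ r ∈ Icc 1 (k - 1), γ ^ (k - r) * G (r - 1) := by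
  obtain ⟨hγ0, hγ1⟩ := hγ
  have hςub : ∀ i, ‖z 0 i‖ ≤ ς := fun i => hς.2 ⟨i, rfl⟩
  have hς0 : 0 ≤ ς := by
    obtain ⟨i, hi⟩ := hς.1
    exact hi ▸ norm_nonneg _
  -- representation formula
  have hrep : ∀ k : ℕ, ∀ i, z k i =
      (∑ j, (A ^ k) i j • z 0 j)
        + ∑ r ∈ range k, ∑ j, (A ^ r) i j • g (k - 1 - r) j := by
    intro k
    induction k with
    | zero => intro i; simp [Matrix.one_apply]
    | succ k ih =>
      intro i
      rw [hz k i]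
      have h1 : ∑ j, A i j • z k j
          = (∑ j, (A ^ (k + 1)) i j • z 0 j)
            + ∑ r ∈ range k, ∑ j, (A ^ (r + 1)) i j • g (k - 1 - r) j := by
        simp_rw [ih, smul_add, Finset.sum_add_distrib, Finset.smul_sum, smul_smul]
        congr 1
        · rw [Finset.sum_comm]
          refine Finset.sum_congr rfl fun l _ => ?_
          rw [← Finset.sum_smul, pow_succ', Matrix.mul_apply]
        · rw [Finset.sum_comm]
          refine Finset.sum_congr rfl fun r _ => ?_
          rw [Finset.sum_comm]
          refine Finset.sum_congr rfl fun l _ => ?_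
          rw [← Finset.sum_smul, pow_succ', Matrix.mul_apply]
      rw [h1]
      rw [Finset.sum_range_succ' (fun r => ∑ j, (A ^ r) i j • g (k + 1 - 1 - r) j) k]
      have h0 : ∑ j, (A ^ 0) i j • g (k + 1 - 1 - 0) j = g k i := by
        simp [Matrix.one_apply]
      rw [h0, add_assoc]
      congr 2
      refine Finset.sum_congr rfl fun r hr => ?_
      have : k + 1 - 1 - (r + 1) = k - 1 - r := by omega
      rw [this]
  intro k hk i hi
  have hAent : ∀ m : ℕ, 1 ≤ m → ∀ j, |(A ^ m) i j| ≤ Γ * γ ^ m := by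
    intro m hm j
    have h := hA m hm i j
    rw [if_neg (by omega)] at h
    simpa using h
  rw [hrep k i]
  have step1 : ‖(∑ j, (A ^ k) i j • z 0 j)
      + ∑ r ∈ range k, ∑ j, (A ^ r) i j • g (k - 1 - r) j‖
      ≤ (∑ j, ‖(A ^ k) i j • z 0 j‖)
        + ∑ r ∈ range k, ∑ j, ‖(A ^ r) i j • g (k - 1 - r) j‖ := by
    refine (norm_add_le _ _).trans (add_le_add (norm_sum_le _ _) ?_)
    refine (norm_sum_le _ _).trans (Finset.sum_le_sum fun r _ => norm_sum_le _ _)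
  refine step1.trans (add_le_add ?_ ?_)
  · -- first sum bound
    have : ∀ j ∈ (univ : Finset (Fin (2 * N))), ‖(A ^ k) i j • z 0 j‖ ≤ Γ * γ ^ k * ς := by
      intro j _
      rw [norm_smul, Real.norm_eq_abs]
      exact mul_le_mul (hAent k hk j) (hςub j) (norm_nonneg _)
        (by positivity)
    refine (Finset.sum_le_sum this).trans ?_
    rw [Finset.sum_const, Finset.card_univ, Fintype.card_fin, nsmul_eq_mul]
    push_cast
    ring_nf
    nlinarith [pow_pos hγ0 k, hΓ, hς0, mul_pos hΓ (pow_pos hγ0 k)]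
  · -- second sum bound
    set T : ℕ → ℝ := fun r => ∑ j, ‖(A ^ r) i j • g (k - 1 - r) j‖ with hT
    have hT0 : T 0 = 0 := by
      refine Finset.sum_eq_zero fun j _ => ?_
      by_cases hj : (j : ℕ) < N
      · have : (A ^ 0) i j = 0 := by
          rw [pow_zero, Matrix.one_apply_ne (by intro h; omega)]
        simp only [this, zero_smul, norm_zero]
      · rw [hg (k - 1 - 0) j (by omega)]
        simp
    have hTb : ∀ r ∈ range (k - 1), T (k - 1 - r) ≤ Γ * (γ ^ (k - 1 - r) * G r) := by
      intro r hr
      rw [Finset.mem_range] at hr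
      have he1 : 1 ≤ k - 1 - r := by omega
      have hidx : k - 1 - (k - 1 - r) = r := by omega
      rw [hT]
      simp only [hidx]
      rw [← Finset.sum_filter_add_sum_filter_not univ (fun j : Fin (2 * N) => (j : ℕ) < N)]
      have hz2 : ∑ j ∈ univ.filter (fun j : Fin (2 * N) => ¬ (j : ℕ) < N),
          ‖(A ^ (k - 1 - r)) i j • g r j‖ = 0 := by
        refine Finset.sum_eq_zero fun j hj => ?_
        rw [Finset.mem_filter] at hj
        rw [hg r j (by omega)]
        simp
      rw [hz2, add_zero, hG, Finset.mul_sum, Finset.mul_sum]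
      refine Finset.sum_le_sum fun j hj => ?_
      rw [norm_smul, Real.norm_eq_abs, ← mul_assoc]
      exact mul_le_mul_of_nonneg_right (hAent _ he1 j) (norm_nonneg _)
    calc ∑ r ∈ range k, T r = ∑ r ∈ range k, T (k - 1 - r) := (Finset.sum_range_reflect T k).symm
      _ = ∑ r ∈ range (k - 1), T (k - 1 - r) + T (k - 1 - (k - 1)) := by
          rw [← Finset.sum_range_succ, Nat.sub_add_cancel hk]
      _ = ∑ r ∈ range (k - 1), T (k - 1 - r) := by
          rw [Nat.sub_self, hT0, add_zero]
      _ ≤ ∑ r ∈ range (k - 1), Γ * (γ ^ (k - 1 - r) * G r) := Finset.sum_le_sum hTb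
      _ = Γ * ∑ r ∈ Icc 1 (k - 1), γ ^ (k - r) * G (r - 1) := by
          rw [← Finset.mul_sum]
          congr 1
          rw [show Icc 1 (k - 1) = Ico 1 k by rw [← Finset.Ico_add_one_right_eq_Icc]; congr 1; omega,
            Finset.sum_Ico_eq_sum_range]
          refine Finset.sum_congr rfl fun r hr => ?_
          have h1 : k - (1 + r) = k - 1 - r := by omega
          have h2 : 1 + r - 1 = r := by omega
          rw [h1, h2]
end

section
/- Let (Ω, ℱ, ℙ) be a probability space and let (G_k)_{k≥0} and (H_k)_{k≥0} be nonnegative real-valued random variables with each H_k square-integrable and each G_k integrable. Let N ≥ 1, ς ≥ 0, Γ > 0, γ ∈ (0,1), K₁ > 0 be constants, let ε satisfy 0 < ε < (1−γ)/(2√3·NΓγ), and let (α_k)_{k≥0} be a positive non-increasing real sequence. Assume: (i) almost surely, for all k ≥ 1, G_k ≤ 4N²ςεΓγ^k + α_k H_k + 2NεΓ Σ_{r=1}^{k−1} γ^{k−r} G_{r−1}; and (ii) E[H_k²] ≤ N²K₁² for all k. Then there exist constants Φ₁ > 0 and Ψ₁ > 0 (independent of K) such that for every K ≥ 1: Σ_{k=1}^{K}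 α_k E[G_k] ≤ Φ₁ Σ_{k=1}^{K} α_k² + Ψ₁. -/
open MeasureTheory Finset

private lemma geom_Icc_eq {γ : ℝ} (h1 : γ ≠ 1) (n : ℕ) :
    ∑ k ∈ Icc 1 n, γ ^ k = (γ - γ ^ (n + 1)) / (1 - γ) := by
  have h1' : 1 - γ ≠ 0 := sub_ne_zero.mpr (Ne.symm h1)
  induction n with
  | zero => simp
  | succ n ih =>
    rw [Finset.sum_Icc_succ_top (Nat.succ_le_succ (Nat.zero_le n)), ih]
    field_simp
    ring

private lemma geom_Icc_le {γ : ℝ} (h0 : 0 ≤ γ) (h1 : γ < 1) (n : ℕ) :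
    ∑ k ∈ Icc 1 n, γ ^ k ≤ γ / (1 - γ) := by
  rw [geom_Icc_eq (ne_of_lt h1)]
  have h3 : 0 ≤ γ ^ (n + 1) := pow_nonneg h0 _
  have h2 : 0 < 1 - γ := by linarith
  exact div_le_div_of_nonneg_right (by linarith) h2.le

private lemma geom_tail_le {γ : ℝ} (h0 : 0 ≤ γ) (h1 : γ < 1) (r n : ℕ) :
    ∑ k ∈ Icc (r + 1) n, γ ^ (k - r) ≤ γ / (1 - γ) := by
  have he : ∑ k ∈ Icc (r + 1) n, γ ^ (k - r) = ∑ j ∈ Icc 1 (n - r), γ ^ j := by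
    apply Finset.sum_nbij' (fun k => k - r) (fun j => j + r)
    · intro a ha; simp only [mem_Icc] at *; omega
    · intro a ha; simp only [mem_Icc] at *; omega
    · intro a ha; simp only [mem_Icc] at *; omega
    · intro a ha; simp only [mem_Icc] at *; omega
    · intro a ha; rfl
  rw [he]; exact geom_Icc_le h0 h1 _

/-- Lemma 4-(1): `Σ_{k=1}^K α_k E[G_k] ≤ Φ₁ Σ_{k=1}^K α_k² + Ψ₁`. -/
theorem stmt_4 {Ω : Type*} [MeasurableSpace Ω] (ℙ : Measure Ω) [IsProbabilityMeasure ℙ]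
    (G H : ℕ → Ω → ℝ)
    (hGnn : ∀ k ω, 0 ≤ G k ω) (hHnn : ∀ k ω, 0 ≤ H k ω)
    (hHL2 : ∀ k, MemLp (H k) 2 ℙ) (hGint : ∀ k, Integrable (G k) ℙ)
    (N ς Γ γ K₁ ε : ℝ) (hN : 1 ≤ N) (hς : 0 ≤ ς) (hΓ : 0 < Γ)
    (hγ : γ ∈ Set.Ioo (0 : ℝ) 1) (hK₁ : 0 < K₁)
    (hε : 0 < ε) (hε' : ε < (1 - γ) / (2 * Real.sqrt 3 * N * Γ * γ))
    (α : ℕ → ℝ) (hαpos : ∀ k, 0 < α k) (hαmono : ∀ k, α (k + 1) ≤ α k)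
    (hrec : ∀ᵐ ω ∂ℙ, ∀ k : ℕ, 1 ≤ k →
      G k ω ≤ 4 * N ^ 2 * ς * ε * Γ * γ ^ k + α k * H k ω
        + 2 * N * ε * Γ * ∑ r ∈ Icc 1 (k - 1), γ ^ (k - r) * G (r - 1) ω)
    (hH2 : ∀ k, ∫ ω, (H k ω) ^ 2 ∂ℙ ≤ N ^ 2 * K₁ ^ 2) :
    ∃ Φ₁ > (0 : ℝ), ∃ Ψ₁ > (0 : ℝ), ∀ K : ℕ, 1 ≤ K →
      ∑ k ∈ Icc 1 K, α k * ∫ ω, G k ω ∂ℙ ≤ Φ₁ * ∑ k ∈ Icc 1 K, (α k) ^ 2 + Ψ₁ := by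
  obtain ⟨hγ0, hγ1⟩ := hγ
  have hN0 : 0 < N := lt_of_lt_of_le one_pos hN
  set A : ℝ := 4 * N ^ 2 * ς * ε * Γ with hA
  set B : ℝ := 2 * N * ε * Γ with hB
  set D : ℝ := γ / (1 - γ) with hD
  set c : ℝ := B * D with hc
  have h1γ : 0 < 1 - γ := by linarith
  have hApos : 0 ≤ A := by positivity
  have hBpos : 0 < B := by positivity
  have hDpos : 0 < D := by positivity
  have hcpos : 0 < c := by positivity
  -- c < 1
  have hs3 : (1 : ℝ) ≤ Real.sqrt 3 := by
    rw [show (1 : ℝ) = Real.sqrt 1 from Real.sqrt_one.symm]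
    exact Real.sqrt_le_sqrt (by norm_num)
  have hc1 : c < 1 := by
    have hden : 0 < 2 * Real.sqrt 3 * N * Γ * γ := by positivity
    have h2 : ε * (2 * Real.sqrt 3 * N * Γ * γ) < 1 - γ := by
      have := (lt_div_iff₀ hden).mp hε'
      linarith
    have hBγ : B * γ < 1 - γ := by
      have hpos : 0 < 2 * N * ε * Γ * γ := by positivity
      have h4 : 0 ≤ (Real.sqrt 3 - 1) * (2 * N * ε * Γ * γ) :=
        mul_nonneg (by linarith) hpos.le
      rw [hB]; nlinarith [h2]
    rw [hc, hD, ← mul_div_assoc]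
    exact (div_lt_one h1γ).mpr hBγ
  -- integrals
  set g : ℕ → ℝ := fun k => ∫ ω, G k ω ∂ℙ with hg
  have hgnn : ∀ k, 0 ≤ g k := fun k => integral_nonneg (fun ω => hGnn k ω)
  have hHint : ∀ k, Integrable (H k) ℙ := fun k => (hHL2 k).integrable one_le_two
  -- E[H k] ≤ N * K₁
  have hhk : ∀ k, ∫ ω, H k ω ∂ℙ ≤ N * K₁ := by
    intro k
    have hv := ProbabilityTheory.variance_nonneg (H k) ℙ
    have hdef := ProbabilityTheory.variance_eq_sub (hHL2 k)
    have hsq : (∫ ω, H k ω ∂ℙ) ^ 2 ≤ ∫ ω, (H k ω) ^ 2 ∂ℙ := by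
      have : (∫ ω, (H k ω) ^ 2 ∂ℙ) = ∫ ω, (H k ^ 2) ω ∂ℙ := by
        simp [Pi.pow_apply]
      rw [this]
      rw [hdef] at hv; linarith
    have hnn : 0 ≤ ∫ ω, H k ω ∂ℙ := integral_nonneg (fun ω => hHnn k ω)
    nlinarith [hH2 k, mul_pos hN0 hK₁]
  -- key expectation inequality
  have key : ∀ k : ℕ, 1 ≤ k → g k ≤ A * γ ^ k + α k * (∫ ω, H k ω ∂ℙ)
      + B * ∑ r ∈ Icc 1 (k - 1), γ ^ (k - r) * g (r - 1) := by
    intro k hk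
    have hint2 : Integrable (fun ω => ∑ r ∈ Icc 1 (k - 1), γ ^ (k - r) * G (r - 1) ω) ℙ :=
      integrable_finset_sum _ fun r _ => (hGint (r - 1)).const_mul _
    have ha : Integrable (fun _ : Ω => A * γ ^ k) ℙ := integrable_const _
    have hb : Integrable (fun ω => α k * H k ω) ℙ := (hHint k).const_mul _
    have hab : Integrable (fun ω => A * γ ^ k + α k * H k ω) ℙ := by exact ha.add hb
    have hc' : Integrable (fun ω => B * ∑ r ∈ Icc 1 (k - 1), γ ^ (k - r) * G (r - 1) ω) ℙ :=
      hint2.const_mul _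
    have h1 : g k ≤ ∫ ω, (A * γ ^ k + α k * H k ω
        + B * ∑ r ∈ Icc 1 (k - 1), γ ^ (k - r) * G (r - 1) ω) ∂ℙ := by
      refine integral_mono_ae (hGint k) ?_ (hrec.mono fun ω hω => hω k hk)
      exact hab.add hc'
    calc g k ≤ _ := h1
      _ = A * γ ^ k + α k * (∫ ω, H k ω ∂ℙ)
          + B * ∑ r ∈ Icc 1 (k - 1), γ ^ (k - r) * g (r - 1) := by
        rw [integral_add hab hc', integral_add ha hb,
          integral_const, integral_const_mul, integral_const_mul,
          integral_finset_sum _ (fun r _ => (hGint (r - 1)).const_mul _)]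
        simp only [measure_univ, probReal_univ, ENNReal.toReal_one, one_smul, integral_const_mul, hg]
  -- monotonicity of α
  have hanti : ∀ i j : ℕ, i ≤ j → α j ≤ α i :=
    fun i j hij => antitone_nat_of_succ_le hαmono hij
  -- constants
  refine ⟨N * K₁ / (1 - c), div_pos (by positivity) (by linarith),
    (A * α 0 * D + c * (α 0 * g 0)) / (1 - c) + 1, ?_, ?_⟩
  · have : 0 ≤ (A * α 0 * D + c * (α 0 * g 0)) / (1 - c) := by
      apply div_nonneg _ (by linarith)
      have := hαpos 0
      have := hgnn 0
      positivity
    linarith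
  intro K hK
  set S : ℝ := ∑ k ∈ Icc 1 K, α k * g k with hS
  set T : ℝ := ∑ k ∈ Icc 1 K, (α k) ^ 2 with hT
  -- step 1 : termwise bound and split
  have step1 : S ≤ A * (∑ k ∈ Icc 1 K, α k * γ ^ k) + (N * K₁) * T
      + B * ∑ k ∈ Icc 1 K, ∑ r ∈ Icc 1 (k - 1), α k * (γ ^ (k - r) * g (r - 1)) := by
    have hterm : ∀ k ∈ Icc 1 K, α k * g k ≤ A * (α k * γ ^ k) + (N * K₁) * (α k) ^ 2
        + B * ∑ r ∈ Icc 1 (k - 1), α k * (γ ^ (k - r) * g (r - 1)) := by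
      intro k hkmem
      rw [mem_Icc] at hkmem
      have hk1 : α k * g k ≤ α k * (A * γ ^ k + α k * (∫ ω, H k ω ∂ℙ)
          + B * ∑ r ∈ Icc 1 (k - 1), γ ^ (k - r) * g (r - 1)) :=
        mul_le_mul_of_nonneg_left (key k hkmem.1) (hαpos k).le
      have he : α k * (A * γ ^ k + α k * (∫ ω, H k ω ∂ℙ)
            + B * ∑ r ∈ Icc 1 (k - 1), γ ^ (k - r) * g (r - 1))
          = A * (α k * γ ^ k) + (α k) ^ 2 * (∫ ω, H k ω ∂ℙ)
            + B * ∑ r ∈ Icc 1 (k - 1), α k * (γ ^ (k - r) * g (r - 1)) := by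
        rw [show (∑ r ∈ Icc 1 (k - 1), α k * (γ ^ (k - r) * g (r - 1)))
            = α k * ∑ r ∈ Icc 1 (k - 1), γ ^ (k - r) * g (r - 1) from
          (Finset.mul_sum _ _ _).symm]
        ring
      have hH' : (α k) ^ 2 * (∫ ω, H k ω ∂ℙ) ≤ (N * K₁) * (α k) ^ 2 := by
        rw [mul_comm (N * K₁) _]
        exact mul_le_mul_of_nonneg_left (hhk k) (sq_nonneg _)
      calc α k * g k ≤ _ := hk1
        _ = _ := he
        _ ≤ _ := by linarith
    calc S ≤ ∑ k ∈ Icc 1 K, (A * (α k * γ ^ k) + (N * K₁) * (α k) ^ 2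
        + B * ∑ r ∈ Icc 1 (k - 1), α k * (γ ^ (k - r) * g (r - 1))) := Finset.sum_le_sum hterm
      _ = _ := by
        rw [Finset.sum_add_distrib, Finset.sum_add_distrib, ← Finset.mul_sum, ← Finset.mul_sum,
          ← Finset.mul_sum, hT]
  -- step 2 : geometric part
  have step2 : ∑ k ∈ Icc 1 K, α k * γ ^ k ≤ α 0 * D := by
    calc ∑ k ∈ Icc 1 K, α k * γ ^ k ≤ ∑ k ∈ Icc 1 K, α 0 * γ ^ k := by
          refine Finset.sum_le_sum fun k _ => ?_
          exact mul_le_mul_of_nonneg_right (hanti 0 k (Nat.zero_le k)) (pow_nonneg hγ0.le k)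
      _ = α 0 * ∑ k ∈ Icc 1 K, γ ^ k := (Finset.mul_sum _ _ _).symm
      _ ≤ α 0 * D := mul_le_mul_of_nonneg_left (geom_Icc_le hγ0.le hγ1 K) (hαpos 0).le
  -- step 3 : double sum
  have step3 : ∑ k ∈ Icc 1 K, ∑ r ∈ Icc 1 (k - 1), α k * (γ ^ (k - r) * g (r - 1))
      ≤ D * (α 0 * g 0 + S) := by
    have hswap : ∑ k ∈ Icc 1 K, ∑ r ∈ Icc 1 (k - 1), α k * (γ ^ (k - r) * g (r - 1))
        = ∑ r ∈ Icc 1 (K - 1), ∑ k ∈ Icc (r + 1) K, α k * (γ ^ (k - r) * g (r - 1)) := by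
      apply Finset.sum_comm'
      intro x y; simp only [mem_Icc]; omega
    rw [hswap]
    have hinner : ∀ r ∈ Icc 1 (K - 1),
        ∑ k ∈ Icc (r + 1) K, α k * (γ ^ (k - r) * g (r - 1))
          ≤ D * (α (r - 1) * g (r - 1)) := by
      intro r _
      calc ∑ k ∈ Icc (r + 1) K, α k * (γ ^ (k - r) * g (r - 1))
          ≤ ∑ k ∈ Icc (r + 1) K, α (r - 1) * (γ ^ (k - r) * g (r - 1)) := by
            refine Finset.sum_le_sum fun k hkm => ?_
            rw [mem_Icc] at hkm
            have : α k ≤ α (r - 1) := hanti (r - 1) k (by omega)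
            have hnn : 0 ≤ γ ^ (k - r) * g (r - 1) :=
              mul_nonneg (pow_nonneg hγ0.le _) (hgnn _)
            exact mul_le_mul_of_nonneg_right this hnn
        _ = (∑ k ∈ Icc (r + 1) K, γ ^ (k - r)) * (α (r - 1) * g (r - 1)) := by
            rw [Finset.sum_mul]; congr 1; ext k; ring
        _ ≤ D * (α (r - 1) * g (r - 1)) := by
            refine mul_le_mul_of_nonneg_right (geom_tail_le hγ0.le hγ1 r K) ?_
            exact mul_nonneg (hαpos _).le (hgnn _)
    calc _ ≤ ∑ r ∈ Icc 1 (K - 1), D * (α (r - 1) * g (r - 1)) := Finset.sum_le_sum hinner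
      _ = D * ∑ r ∈ Icc 1 (K - 1), α (r - 1) * g (r - 1) := (Finset.mul_sum _ _ _).symm
      _ ≤ D * (α 0 * g 0 + S) := by
        refine mul_le_mul_of_nonneg_left ?_ hDpos.le
        have hre : ∑ r ∈ Icc 1 (K - 1), α (r - 1) * g (r - 1)
            = ∑ j ∈ range (K - 1), α j * g j := by
          apply Finset.sum_nbij' (fun r => r - 1) (fun j => j + 1)
          · intro a ha; simp only [mem_Icc, mem_range] at *; omega
          · intro a ha; simp only [mem_Icc, mem_range] at *; omega
          · intro a ha; simp only [mem_Icc, mem_range] at *; omega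
          · intro a ha; simp only [mem_Icc, mem_range] at *; omega
          · intro a ha; rfl
        rw [hre]
        have hsub : ∑ j ∈ range (K - 1), α j * g j
            ≤ ∑ j ∈ insert 0 (Icc 1 K), α j * g j := by
          refine Finset.sum_le_sum_of_subset_of_nonneg ?_ fun j _ _ =>
            mul_nonneg (hαpos j).le (hgnn j)
          intro j hj; simp only [mem_range, mem_insert, mem_Icc] at *; omega
        rw [Finset.sum_insert (by simp)] at hsub
        exact hsub
  -- combine
  have hfinal : S ≤ A * (α 0 * D) + (N * K₁) * T + c * (α 0 * g 0 + S) := by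
    have h2 : A * (∑ k ∈ Icc 1 K, α k * γ ^ k) ≤ A * (α 0 * D) :=
      mul_le_mul_of_nonneg_left step2 hApos
    have h3 : B * ∑ k ∈ Icc 1 K, ∑ r ∈ Icc 1 (k - 1), α k * (γ ^ (k - r) * g (r - 1))
        ≤ c * (α 0 * g 0 + S) := by
      calc B * ∑ k ∈ Icc 1 K, ∑ r ∈ Icc 1 (k - 1), α k * (γ ^ (k - r) * g (r - 1))
          ≤ B * (D * (α 0 * g 0 + S)) := mul_le_mul_of_nonneg_left step3 hBpos.le
        _ = c * (α 0 * g 0 + S) := by rw [hc]; ring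
    linarith
  have h1c : 0 < 1 - c := by linarith
  have hfin2 : (1 - c) * S ≤ (N * K₁) * T + (A * α 0 * D + c * (α 0 * g 0)) := by
    nlinarith [hfinal]
  calc S = ((1 - c) * S) / (1 - c) := by field_simp
    _ ≤ ((N * K₁) * T + (A * α 0 * D + c * (α 0 * g 0))) / (1 - c) :=
        div_le_div_of_nonneg_right hfin2 h1c.le
    _ = N * K₁ / (1 - c) * T + (A * α 0 * D + c * (α 0 * g 0)) / (1 - c) := by ring
    _ ≤ N * K₁ / (1 - c) * T + ((A * α 0 * D + c * (α 0 * g 0)) / (1 - c) + 1) := by linarith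
end

section
/- Let (Ω, ℱ, ℙ) be a probability space and let (G_k)_{k≥0} and (H_k)_{k≥0} be nonnegative real-valued random variables with each H_k and each G_k square-integrable. Let N ≥ 1, ς ≥ 0, Γ > 0, γ ∈ (0,1), K₁ > 0 be constants, let ε satisfy 0 < ε < (1−γ)/(2√3·NΓγ), and let (α_k)_{k≥0} be a positive non-increasing real sequence. Assume: (i) almost surely, for all k ≥ 1, G_k ≤ 4N²ςεΓγ^k + α_k H_k + 2NεΓ Σ_{r=1}^{k−1} γ^{k−r} G_{r−1}; and (ii) E[H_k²] ≤ N²K₁² for all k. Then there exist constants Φ₂ > 0 and Ψ₂ > 0 (independent of K) such that for every K ≥ 1: Σ_{k=1}^{K} E[G_k²] ≤ Φ₂ Σ_{k=1}^{K} α_k² + Ψ₂. -/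
open MeasureTheory Finset

private lemma geom_Icc {q : ℝ} (h0 : 0 < q) (h1 : q < 1) (m : ℕ) :
    ∑ j ∈ Icc 1 m, q ^ j ≤ q / (1 - q) := by
  have h1q : (0:ℝ) < 1 - q := by linarith
  have e1 : ∑ j ∈ Icc 1 m, q ^ j = q * ∑ i ∈ Finset.range m, q ^ i := by
    rw [show Icc 1 m = Finset.Ico 1 (m+1) by rfl, Finset.sum_Ico_eq_sum_range]
    simp only [Nat.add_sub_cancel]
    rw [Finset.mul_sum]
    exact Finset.sum_congr rfl fun i _ => by rw [pow_add, pow_one]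
  rw [e1, geom_sum_eq (ne_of_lt h1)]
  have e2 : (q ^ m - 1) / (q - 1) = (1 - q ^ m) / (1 - q) := by
    rw [div_eq_div_iff (by linarith) (by linarith)]; ring
  rw [e2]
  have hm : (0:ℝ) ≤ q ^ m := pow_nonneg h0.le m
  rw [mul_div_assoc', div_le_div_iff₀ h1q h1q]
  nlinarith [mul_nonneg (mul_nonneg h0.le h1q.le) hm]

private lemma aux_shift (q : ℝ) (a b : ℕ) :
    ∑ k ∈ Icc (a+1) b, q ^ (k - a) = ∑ j ∈ Icc 1 (b - a), q ^ j := by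
  refine Finset.sum_nbij' (fun k => k - a) (fun j => j + a) ?_ ?_ ?_ ?_ ?_ <;>
    intro x hx <;> simp only [Finset.mem_Icc] at hx ⊢ <;> first | omega | rfl

private lemma aux_reflect (q : ℝ) (k : ℕ) :
    ∑ r ∈ Icc 1 (k-1), q ^ (k - r) = ∑ j ∈ Icc 1 (k-1), q ^ j := by
  refine Finset.sum_nbij' (fun r => k - r) (fun j => k - j) ?_ ?_ ?_ ?_ ?_ <;>
    intro x hx <;> simp only [Finset.mem_Icc] at hx ⊢ <;> first | omega | rfl

private lemma aux_pred_sum (g : ℕ → ℝ) (K : ℕ) (hK : 1 ≤ K) :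
    ∑ r ∈ Icc 1 K, g (r - 1) = g 0 + ∑ j ∈ Icc 1 (K - 1), g j := by
  have h1 : ∑ r ∈ Icc 1 K, g (r - 1) = ∑ j ∈ Icc 0 (K - 1), g j := by
    refine Finset.sum_nbij' (fun r => r - 1) (fun j => j + 1) ?_ ?_ ?_ ?_ ?_ <;>
      intro x hx <;> simp only [Finset.mem_Icc] at hx ⊢ <;> first | omega | rfl
  rw [h1, show Icc 0 (K-1) = insert 0 (Icc 1 (K-1)) from by
    ext x; simp only [Finset.mem_Icc, Finset.mem_insert]; omega,
    Finset.sum_insert (by simp)]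

private lemma tri_swap (f : ℕ → ℕ → ℝ) (K : ℕ) :
    ∑ k ∈ Icc 1 K, ∑ r ∈ Icc 1 (k-1), f k r
      = ∑ r ∈ Icc 1 K, ∑ k ∈ Icc (r+1) K, f k r := by
  induction K with
  | zero => simp [Finset.Icc_eq_empty (by omega : ¬ (1:ℕ) ≤ 0)]
  | succ n ih =>
    rw [Finset.sum_Icc_succ_top (by omega : 1 ≤ n + 1)
      (fun k => ∑ r ∈ Icc 1 (k-1), f k r), ih,
      Finset.sum_Icc_succ_top (by omega : 1 ≤ n + 1)
      (fun r => ∑ k ∈ Icc (r+1) (n+1), f k r)]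
    have hemp : Icc (n+1+1) (n+1) = (∅ : Finset ℕ) := Finset.Icc_eq_empty (by omega)
    simp only [Nat.add_sub_cancel, hemp, Finset.sum_empty, add_zero]
    rw [← Finset.sum_add_distrib]
    refine Finset.sum_congr rfl fun r hr => ?_
    simp only [Finset.mem_Icc] at hr
    rw [Finset.sum_Icc_succ_top (by omega : r + 1 ≤ n + 1)]

set_option maxHeartbeats 1000000 in
/-- Lemma 4-(2): `Σ_{k=1}^K E[G_k²] ≤ Φ₂ Σ_{k=1}^K α_k² + Ψ₂`. -/
theorem stmt_5 {Ω : Type*} [MeasurableSpace Ω] (ℙ : Measure Ω) [IsProbabilityMeasure ℙ]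
    (G H : ℕ → Ω → ℝ)
    (hGnn : ∀ k ω, 0 ≤ G k ω) (hHnn : ∀ k ω, 0 ≤ H k ω)
    (hHL2 : ∀ k, MemLp (H k) 2 ℙ) (hGL2 : ∀ k, MemLp (G k) 2 ℙ)
    (N ς Γ γ K₁ ε : ℝ) (hN : 1 ≤ N) (hς : 0 ≤ ς) (hΓ : 0 < Γ)
    (hγ : γ ∈ Set.Ioo (0 : ℝ) 1) (hK₁ : 0 < K₁)
    (hε : 0 < ε) (hε' : ε < (1 - γ) / (2 * Real.sqrt 3 * N * Γ * γ))
    (α : ℕ → ℝ) (hαpos : ∀ k, 0 < α k) (hαmono : ∀ k, α (k + 1) ≤ α k)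
    (hrec : ∀ᵐ ω ∂ℙ, ∀ k : ℕ, 1 ≤ k →
      G k ω ≤ 4 * N ^ 2 * ς * ε * Γ * γ ^ k + α k * H k ω
        + 2 * N * ε * Γ * ∑ r ∈ Icc 1 (k - 1), γ ^ (k - r) * G (r - 1) ω)
    (hH2 : ∀ k, ∫ ω, (H k ω) ^ 2 ∂ℙ ≤ N ^ 2 * K₁ ^ 2) :
    ∃ Φ₂ > (0 : ℝ), ∃ Ψ₂ > (0 : ℝ), ∀ K : ℕ, 1 ≤ K →
      ∑ k ∈ Icc 1 K, ∫ ω, (G k ω) ^ 2 ∂ℙ ≤ Φ₂ * ∑ k ∈ Icc 1 K, (α k) ^ 2 + Ψ₂ := by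
  obtain ⟨hγ0, hγ1⟩ := hγ
  have hN0 : (0:ℝ) < N := lt_of_lt_of_le one_pos hN
  set A : ℝ := 4 * N ^ 2 * ς * ε * Γ with hA
  set B : ℝ := 2 * N * ε * Γ with hB
  have hB0 : 0 < B := by positivity
  have hA0 : 0 ≤ A := by positivity
  have h1γ : (0:ℝ) < 1 - γ := by linarith
  set D : ℝ := 3 * B ^ 2 * γ / (1 - γ) with hD
  have hD0 : 0 < D := by positivity
  set c : ℝ := D * γ / (1 - γ) with hc
  have hc0 : 0 < c := by positivity
  have hsqrt3 : Real.sqrt 3 ^ 2 = 3 := Real.sq_sqrt (by norm_num)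
  have hsqrt3pos : (0:ℝ) < Real.sqrt 3 := Real.sqrt_pos.mpr (by norm_num)
  have hden : (0:ℝ) < 2 * Real.sqrt 3 * N * Γ * γ := by positivity
  have hε2 : ε * (2 * Real.sqrt 3 * N * Γ * γ) < 1 - γ := by
    have := mul_lt_mul_of_pos_right hε' hden
    rwa [div_mul_cancel₀ _ hden.ne'] at this
  have h3 : Real.sqrt 3 * (B * γ) < 1 - γ := by
    have e : Real.sqrt 3 * (B * γ) = ε * (2 * Real.sqrt 3 * N * Γ * γ) := by
      rw [hB]; ring
    linarith [e ▸ hε2]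
  have hBγnn : (0:ℝ) ≤ Real.sqrt 3 * (B * γ) := by positivity
  have hkey2 : 3 * B ^ 2 * γ ^ 2 < (1 - γ) ^ 2 := by nlinarith
  have hc1 : c < 1 := by
    have e : c = 3 * B ^ 2 * γ ^ 2 / ((1 - γ) ^ 2) := by
      rw [hc, hD]; field_simp
    rw [e, div_lt_one (by positivity)]
    exact hkey2
  have h1c : (0:ℝ) < 1 - c := by linarith
  -- notation for second moments
  set g : ℕ → ℝ := fun k => ∫ ω, (G k ω) ^ 2 ∂ℙ with hg
  have hg0 : ∀ k, 0 ≤ g k := fun k => integral_nonneg fun ω => sq_nonneg _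
  have hgint : ∀ k, Integrable (fun ω => G k ω ^ 2) ℙ := fun k => (hGL2 k).integrable_sq
  have hHint : ∀ k, Integrable (fun ω => H k ω ^ 2) ℙ := fun k => (hHL2 k).integrable_sq
  -- per-step bound on second moments
  have hkey : ∀ k, 1 ≤ k → g k ≤ 3 * A ^ 2 * (γ ^ 2) ^ k + 3 * N ^ 2 * K₁ ^ 2 * (α k) ^ 2
      + D * ∑ r ∈ Icc 1 (k-1), γ ^ (k - r) * g (r - 1) := by
    intro k hk
    set R : Ω → ℝ := fun ω => 3 * (A * γ ^ k) ^ 2 + 3 * (α k) ^ 2 * (H k ω) ^ 2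
      + D * ∑ r ∈ Icc 1 (k-1), γ ^ (k - r) * (G (r-1) ω) ^ 2 with hR
    have hint1 : Integrable (fun ω => 3 * (A * γ ^ k) ^ 2 + 3 * (α k) ^ 2 * (H k ω) ^ 2) ℙ :=
      (integrable_const _).add ((hHint k).const_mul _)
    have hint2 : Integrable (fun ω => D * ∑ r ∈ Icc 1 (k-1), γ ^ (k - r) * (G (r-1) ω) ^ 2) ℙ :=
      (integrable_finset_sum _ fun r _ => (hgint (r-1)).const_mul _).const_mul _
    have hRint : Integrable R ℙ := hint1.add hint2
    have hae : (fun ω => G k ω ^ 2) ≤ᵐ[ℙ] R := by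
      filter_upwards [hrec] with ω hω
      have h1 := hω k hk
      set S := ∑ r ∈ Icc 1 (k-1), γ ^ (k - r) * G (r-1) ω with hS
      set Q := ∑ r ∈ Icc 1 (k-1), γ ^ (k - r) * (G (r-1) ω) ^ 2 with hQ
      have hSnn : 0 ≤ S := Finset.sum_nonneg fun r _ =>
        mul_nonneg (pow_nonneg hγ0.le _) (hGnn _ _)
      have hQnn : 0 ≤ Q := Finset.sum_nonneg fun r _ =>
        mul_nonneg (pow_nonneg hγ0.le _) (sq_nonneg _)
      have hsq : G k ω ^ 2 ≤ (A * γ ^ k + α k * H k ω + B * S) ^ 2 :=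
        pow_le_pow_left₀ (hGnn k ω) h1 2
      have h3' : (A * γ ^ k + α k * H k ω + B * S) ^ 2
          ≤ 3 * (A * γ ^ k) ^ 2 + 3 * (α k * H k ω) ^ 2 + 3 * (B * S) ^ 2 := by
        nlinarith [sq_nonneg (A * γ ^ k - α k * H k ω), sq_nonneg (A * γ ^ k - B * S),
          sq_nonneg (α k * H k ω - B * S)]
      have hCS : S ^ 2 ≤ (γ / (1 - γ)) * Q := by
        have h4 : S = ∑ r ∈ Icc 1 (k-1),
            Real.sqrt (γ ^ (k - r)) * (Real.sqrt (γ ^ (k - r)) * G (r-1) ω) := by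
          refine Finset.sum_congr rfl fun r _ => ?_
          rw [← mul_assoc, Real.mul_self_sqrt (pow_nonneg hγ0.le _)]
        have h5 := Finset.sum_mul_sq_le_sq_mul_sq (Icc 1 (k-1))
          (fun r => Real.sqrt (γ ^ (k - r))) (fun r => Real.sqrt (γ ^ (k - r)) * G (r-1) ω)
        rw [← h4] at h5
        have h6 : ∑ r ∈ Icc 1 (k-1), Real.sqrt (γ ^ (k - r)) ^ 2
            = ∑ r ∈ Icc 1 (k-1), γ ^ (k - r) :=
          Finset.sum_congr rfl fun r _ => Real.sq_sqrt (pow_nonneg hγ0.le _)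
        have h7 : ∑ r ∈ Icc 1 (k-1), (Real.sqrt (γ ^ (k - r)) * G (r-1) ω) ^ 2 = Q :=
          Finset.sum_congr rfl fun r _ => by
            rw [mul_pow, Real.sq_sqrt (pow_nonneg hγ0.le _)]
        rw [h6, h7] at h5
        have h8 : ∑ r ∈ Icc 1 (k-1), γ ^ (k - r) ≤ γ / (1 - γ) := by
          rw [aux_reflect γ k]
          exact geom_Icc hγ0 hγ1 _
        exact h5.trans (mul_le_mul_of_nonneg_right h8 hQnn)
      have h9 : 3 * (B * S) ^ 2 ≤ D * Q := by
        have e : 3 * (B * S) ^ 2 = 3 * B ^ 2 * S ^ 2 := by ring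
        rw [e]
        calc 3 * B ^ 2 * S ^ 2 ≤ 3 * B ^ 2 * ((γ / (1 - γ)) * Q) :=
              mul_le_mul_of_nonneg_left hCS (by positivity)
          _ = D * Q := by rw [hD]; ring
      have h10 : 3 * (α k * H k ω) ^ 2 = 3 * (α k) ^ 2 * (H k ω) ^ 2 := by ring
      show G k ω ^ 2 ≤ 3 * (A * γ ^ k) ^ 2 + 3 * (α k) ^ 2 * (H k ω) ^ 2 + D * Q
      linarith [hsq, h3', h9, h10.ge, h10.le]
    have hmono := integral_mono_ae (hgint k) hRint hae
    have hRval : ∫ ω, R ω ∂ℙ = 3 * (A * γ ^ k) ^ 2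
        + 3 * (α k) ^ 2 * (∫ ω, (H k ω) ^ 2 ∂ℙ)
        + D * ∑ r ∈ Icc 1 (k-1), γ ^ (k - r) * g (r-1) := by
      rw [hR]
      rw [integral_add hint1 hint2, integral_add (integrable_const _) ((hHint k).const_mul _)]
      rw [integral_const]
      simp only [measure_univ, probReal_univ, ENNReal.toReal_one, smul_eq_mul, one_mul]
      rw [integral_const_mul, integral_const_mul,
        integral_finset_sum (Icc 1 (k-1)) (f := fun r ω => γ ^ (k - r) * (G (r-1) ω) ^ 2)
          (fun r _ => (hgint (r-1)).const_mul (γ ^ (k - r)))]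
      have hsum : ∑ r ∈ Icc 1 (k-1), ∫ ω, γ ^ (k - r) * (G (r-1) ω) ^ 2 ∂ℙ
          = ∑ r ∈ Icc 1 (k-1), γ ^ (k - r) * g (r-1) := by
        refine Finset.sum_congr rfl fun r _ => ?_
        rw [integral_const_mul, hg]
      rw [hsum]
    have hH2k := hH2 k
    have hαnn : (0:ℝ) ≤ 3 * (α k) ^ 2 := by positivity
    have hHb : 3 * (α k) ^ 2 * (∫ ω, (H k ω) ^ 2 ∂ℙ) ≤ 3 * (α k) ^ 2 * (N ^ 2 * K₁ ^ 2) :=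
      mul_le_mul_of_nonneg_left hH2k hαnn
    have e3 : 3 * (A * γ ^ k) ^ 2 = 3 * A ^ 2 * (γ ^ 2) ^ k := by
      rw [mul_pow, ← pow_mul, ← pow_mul, Nat.mul_comm]; ring
    have e4 : 3 * (α k) ^ 2 * (N ^ 2 * K₁ ^ 2) = 3 * N ^ 2 * K₁ ^ 2 * (α k) ^ 2 := by ring
    calc g k ≤ ∫ ω, R ω ∂ℙ := hmono
      _ = _ := hRval
      _ ≤ 3 * A ^ 2 * (γ ^ 2) ^ k + 3 * N ^ 2 * K₁ ^ 2 * (α k) ^ 2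
          + D * ∑ r ∈ Icc 1 (k-1), γ ^ (k - r) * g (r-1) := by
        rw [← e3]
        linarith [hHb, e4.le, e4.ge]
  -- constants
  have hγ2a : (0:ℝ) < γ ^ 2 := by positivity
  have hγ2b : γ ^ 2 < 1 := by nlinarith
  have h1γ2 : (0:ℝ) < 1 - γ ^ 2 := by linarith
  set X : ℝ := 3 * A ^ 2 * (γ ^ 2 / (1 - γ ^ 2)) with hX
  have hX0 : 0 ≤ X := by positivity
  refine ⟨3 * N ^ 2 * K₁ ^ 2 / (1 - c), by positivity,
    (X + c * g 0) / (1 - c) + 1, by positivity, ?_⟩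
  intro K hK
  set T : ℝ := ∑ k ∈ Icc 1 K, (α k) ^ 2 with hT
  have hT0 : 0 ≤ T := Finset.sum_nonneg fun k _ => sq_nonneg _
  set Ssum : ℝ := ∑ k ∈ Icc 1 K, g k with hSsum
  set W : ℝ := ∑ k ∈ Icc 1 K, ∑ r ∈ Icc 1 (k-1), γ ^ (k - r) * g (r-1) with hW
  have step1 : Ssum ≤ 3 * A ^ 2 * (∑ k ∈ Icc 1 K, (γ ^ 2) ^ k)
      + 3 * N ^ 2 * K₁ ^ 2 * T + D * W := by
    have h1 : Ssum ≤ ∑ k ∈ Icc 1 K, (3 * A ^ 2 * (γ ^ 2) ^ k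
        + 3 * N ^ 2 * K₁ ^ 2 * (α k) ^ 2
        + D * ∑ r ∈ Icc 1 (k-1), γ ^ (k - r) * g (r-1)) := by
      rw [hSsum]
      refine Finset.sum_le_sum fun k hk => ?_
      simp only [Finset.mem_Icc] at hk
      exact hkey k hk.1
    have h2 : ∑ k ∈ Icc 1 K, (3 * A ^ 2 * (γ ^ 2) ^ k
        + 3 * N ^ 2 * K₁ ^ 2 * (α k) ^ 2
        + D * ∑ r ∈ Icc 1 (k-1), γ ^ (k - r) * g (r-1))
        = 3 * A ^ 2 * (∑ k ∈ Icc 1 K, (γ ^ 2) ^ k)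
          + 3 * N ^ 2 * K₁ ^ 2 * T + D * W := by
      rw [Finset.sum_add_distrib, Finset.sum_add_distrib,
        ← Finset.mul_sum, ← Finset.mul_sum, ← Finset.mul_sum, hT, hW]
    rw [← h2]
    exact h1
  have step2 : ∑ k ∈ Icc 1 K, (γ ^ 2) ^ k ≤ γ ^ 2 / (1 - γ ^ 2) := geom_Icc hγ2a hγ2b K
  have step3 : W ≤ (γ / (1 - γ)) * (g 0 + Ssum) := by
    rw [hW, tri_swap]
    have inner : ∀ r ∈ Icc 1 K, ∑ k ∈ Icc (r+1) K, γ ^ (k - r) * g (r-1)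
        ≤ (γ / (1 - γ)) * g (r-1) := by
      intro r _
      have e : ∑ k ∈ Icc (r+1) K, γ ^ (k - r) * g (r-1)
          = (∑ k ∈ Icc (r+1) K, γ ^ (k - r)) * g (r-1) := by
        rw [Finset.sum_mul]
      rw [e, aux_shift γ r K]
      exact mul_le_mul_of_nonneg_right (geom_Icc hγ0 hγ1 _) (hg0 _)
    calc ∑ r ∈ Icc 1 K, ∑ k ∈ Icc (r+1) K, γ ^ (k - r) * g (r-1)
        ≤ ∑ r ∈ Icc 1 K, (γ / (1 - γ)) * g (r-1) := Finset.sum_le_sum inner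
      _ = (γ / (1 - γ)) * ∑ r ∈ Icc 1 K, g (r-1) := by rw [Finset.mul_sum]
      _ ≤ (γ / (1 - γ)) * (g 0 + Ssum) := by
          refine mul_le_mul_of_nonneg_left ?_ (by positivity)
          rw [aux_pred_sum g K hK]
          have : ∑ j ∈ Icc 1 (K-1), g j ≤ Ssum := by
            rw [hSsum]
            exact Finset.sum_le_sum_of_subset_of_nonneg
              (Finset.Icc_subset_Icc_right (by omega)) (fun j _ _ => hg0 j)
          linarith
  have step4 : D * W ≤ c * (g 0 + Ssum) := by
    calc D * W ≤ D * ((γ / (1 - γ)) * (g 0 + Ssum)) :=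
          mul_le_mul_of_nonneg_left step3 hD0.le
      _ = c * (g 0 + Ssum) := by rw [hc]; ring
  have hfinal : Ssum ≤ X + 3 * N ^ 2 * K₁ ^ 2 * T + c * (g 0 + Ssum) := by
    have h2 : 3 * A ^ 2 * (∑ k ∈ Icc 1 K, (γ ^ 2) ^ k) ≤ X := by
      rw [hX]
      exact mul_le_mul_of_nonneg_left step2 (by positivity)
    linarith [step1, step4, h2]
  have hS1 : Ssum * (1 - c) ≤ X + c * g 0 + 3 * N ^ 2 * K₁ ^ 2 * T := by nlinarith [hfinal]
  refine le_of_mul_le_mul_right ?_ h1c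
  have expand : (3 * N ^ 2 * K₁ ^ 2 / (1 - c) * T + ((X + c * g 0) / (1 - c) + 1)) * (1 - c)
      = 3 * N ^ 2 * K₁ ^ 2 * T + (X + c * g 0) + (1 - c) := by
    field_simp
    ring
  rw [expand]
  show Ssum * (1 - c) ≤ _
  linarith [hS1, h1c]
end

section
/- Let (Ω, ℱ, ℙ) be a probability space and let (G_k)_{k≥0} and (H_k)_{k≥0} be nonnegative real-valued random variables with each H_k and each G_k square-integrable. Let N ≥ 1, ς ≥ 0, Γ > 0, γ ∈ (0,1), K₁ > 0 be constants, let ε satisfy 0 < ε < (1−γ)/(2√3·NΓγ), and let (α_k)_{k≥0} be a positive non-increasing real sequence. Assume: (i) almost surely, for all k ≥ 1, G_k ≤ 4N²ςεΓγ^k + α_k H_k + 2NεΓ Σ_{r=1}^{k−1} γ^{k−r} G_{r−1}; and (ii) E[H_k²] ≤ N²K₁² for all k. Then there exist constants Φ₃ > 0 and Ψ₃ > 0 (independent of K) such that for every K ≥ 1: Σ_{k=1}^{K} α_k E[H_k G_k] ≤ Φ₃ Σ_{k=1}^{K} α_k² + Ψ₃. -/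
open MeasureTheory Finset

noncomputable def nn2 {Ω : Type*} [MeasurableSpace Ω] (ℙ : Measure Ω) (f : Ω → ℝ) : ℝ :=
  (eLpNorm f 2 ℙ).toReal

section helpers
variable {Ω : Type*} [MeasurableSpace Ω] (ℙ : Measure Ω) [IsProbabilityMeasure ℙ]

lemma nn2_nonneg (f : Ω → ℝ) : 0 ≤ nn2 ℙ f := ENNReal.toReal_nonneg

lemma nn2_add_le {f g : Ω → ℝ} (hf : MemLp f 2 ℙ) (hg : MemLp g 2 ℙ) :
    nn2 ℙ (f + g) ≤ nn2 ℙ f + nn2 ℙ g := by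
  have h := eLpNorm_add_le hf.1 hg.1 one_le_two
  calc nn2 ℙ (f + g) ≤ (eLpNorm f 2 ℙ + eLpNorm g 2 ℙ).toReal :=
        ENNReal.toReal_mono (ENNReal.add_ne_top.2 ⟨hf.2.ne, hg.2.ne⟩) h
    _ = nn2 ℙ f + nn2 ℙ g := ENNReal.toReal_add hf.2.ne hg.2.ne

lemma nn2_sum_le {ι : Type*} (s : Finset ι) (f : ι → Ω → ℝ)
    (hf : ∀ i ∈ s, MemLp (f i) 2 ℙ) :
    nn2 ℙ (fun ω => ∑ i ∈ s, f i ω) ≤ ∑ i ∈ s, nn2 ℙ (f i) := by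
  classical
  induction s using Finset.induction with
  | empty => simp [nn2]
  | @insert a s ha ih =>
      have h1 : (fun ω => ∑ i ∈ insert a s, f i ω)
          = f a + fun ω => ∑ i ∈ s, f i ω := by
        funext ω; simp [Finset.sum_insert ha]
      rw [h1, Finset.sum_insert ha]
      have h2 := nn2_add_le ℙ (hf a (mem_insert_self a s))
        (memLp_finset_sum s fun i hi => hf i (mem_insert_of_mem hi))
      exact h2.trans (by gcongr; exact ih fun i hi => hf i (mem_insert_of_mem hi))

lemma nn2_const (c : ℝ) : nn2 ℙ (fun _ => c) = |c| := by
  rw [nn2, eLpNorm_const c (by norm_num) (IsProbabilityMeasure.ne_zero ℙ)]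
  simp

lemma nn2_smul_le (c : ℝ) (f : Ω → ℝ) (hf : MemLp f 2 ℙ) :
    nn2 ℙ (fun ω => c * f ω) ≤ |c| * nn2 ℙ f := by
  have h : eLpNorm (c • f) 2 ℙ ≤ ‖c‖₊ • eLpNorm f 2 ℙ := eLpNorm_const_smul_le
  have h2 : (‖c‖₊ • eLpNorm f 2 ℙ) ≠ ⊤ := by
    rw [ENNReal.smul_def, smul_eq_mul]
    exact ENNReal.mul_ne_top ENNReal.coe_ne_top hf.2.ne
  have h3 : nn2 ℙ (fun ω => c * f ω) ≤ (‖c‖₊ • eLpNorm f 2 ℙ).toReal :=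
    ENNReal.toReal_mono h2 h
  calc nn2 ℙ (fun ω => c * f ω) ≤ (‖c‖₊ • eLpNorm f 2 ℙ).toReal := h3
    _ = |c| * nn2 ℙ f := by
        rw [ENNReal.smul_def, smul_eq_mul, ENNReal.toReal_mul, ENNReal.coe_toReal,
          coe_nnnorm, Real.norm_eq_abs]
        rfl

lemma nn2_mono {f g : Ω → ℝ} (hg : MemLp g 2 ℙ) (h : ∀ᵐ ω ∂ℙ, ‖f ω‖ ≤ ‖g ω‖) :
    nn2 ℙ f ≤ nn2 ℙ g :=
  ENNReal.toReal_mono hg.2.ne (eLpNorm_mono_ae h)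

lemma integral_mul_le_nn2 {f g : Ω → ℝ} (hf : MemLp f 2 ℙ) (hg : MemLp g 2 ℙ) :
    ∫ ω, f ω * g ω ∂ℙ ≤ nn2 ℙ f * nn2 ℙ g := by
  have h1 : ∫ ω, f ω * g ω ∂ℙ = ∫ ω, (hf.toLp f : Ω → ℝ) ω * (hg.toLp g : Ω → ℝ) ω ∂ℙ := by
    refine integral_congr_ae ?_
    filter_upwards [hf.coeFn_toLp, hg.coeFn_toLp] with ω h1 h2
    rw [h1, h2]
  have h2 : (inner ℝ (hf.toLp f) (hg.toLp g) : ℝ)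
      = ∫ ω, (hf.toLp f : Ω → ℝ) ω * (hg.toLp g : Ω → ℝ) ω ∂ℙ := by
    rw [L2.inner_def]
    refine integral_congr_ae (Filter.Eventually.of_forall fun ω => ?_)
    simp [RCLike.inner_apply, mul_comm]
  rw [h1, ← h2]
  calc (inner ℝ (hf.toLp f) (hg.toLp g) : ℝ) ≤ ‖hf.toLp f‖ * ‖hg.toLp g‖ :=
        real_inner_le_norm _ _
    _ = nn2 ℙ f * nn2 ℙ g := by rw [Lp.norm_toLp, Lp.norm_toLp]; rfl

lemma nn2_sq_eq {f : Ω → ℝ} (hf : MemLp f 2 ℙ) :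
    nn2 ℙ f ^ 2 = ∫ ω, f ω ^ 2 ∂ℙ := by
  have h1 : nn2 ℙ f = ‖hf.toLp f‖ := (Lp.norm_toLp f hf).symm
  rw [h1, ← real_inner_self_eq_norm_sq, L2.inner_def]
  refine integral_congr_ae ?_
  filter_upwards [hf.coeFn_toLp] with ω hω
  simp [RCLike.inner_apply, hω, sq]

lemma nn2_le_of_sq {f : Ω → ℝ} (hf : MemLp f 2 ℙ) {b : ℝ} (hb : 0 ≤ b)
    (h : ∫ ω, f ω ^ 2 ∂ℙ ≤ b ^ 2) : nn2 ℙ f ≤ b := by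
  have h1 : nn2 ℙ f ^ 2 ≤ b ^ 2 := by rw [nn2_sq_eq ℙ hf]; exact h
  nlinarith [nn2_nonneg ℙ f]

end helpers

set_option maxHeartbeats 1000000 in
/-- Lemma 4-(3): `Σ_{k=1}^K α_k E[H_k G_k] ≤ Φ₃ Σ_{k=1}^K α_k² + Ψ₃`. -/
theorem stmt_6 {Ω : Type*} [MeasurableSpace Ω] (ℙ : Measure Ω) [IsProbabilityMeasure ℙ]
    (G H : ℕ → Ω → ℝ)
    (hGnn : ∀ k ω, 0 ≤ G k ω) (hHnn : ∀ k ω, 0 ≤ H k ω)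
    (hHL2 : ∀ k, MemLp (H k) 2 ℙ) (hGL2 : ∀ k, MemLp (G k) 2 ℙ)
    (N ς Γ γ K₁ ε : ℝ) (hN : 1 ≤ N) (hς : 0 ≤ ς) (hΓ : 0 < Γ)
    (hγ : γ ∈ Set.Ioo (0 : ℝ) 1) (hK₁ : 0 < K₁)
    (hε : 0 < ε) (hε' : ε < (1 - γ) / (2 * Real.sqrt 3 * N * Γ * γ))
    (α : ℕ → ℝ) (hαpos : ∀ k, 0 < α k) (hαmono : ∀ k, α (k + 1) ≤ α k)
    (hrec : ∀ᵐ ω ∂ℙ, ∀ k : ℕ, 1 ≤ k →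
      G k ω ≤ 4 * N ^ 2 * ς * ε * Γ * γ ^ k + α k * H k ω
        + 2 * N * ε * Γ * ∑ r ∈ Icc 1 (k - 1), γ ^ (k - r) * G (r - 1) ω)
    (hH2 : ∀ k, ∫ ω, (H k ω) ^ 2 ∂ℙ ≤ N ^ 2 * K₁ ^ 2) :
    ∃ Φ₃ > (0 : ℝ), ∃ Ψ₃ > (0 : ℝ), ∀ K : ℕ, 1 ≤ K →
      ∑ k ∈ Icc 1 K, α k * ∫ ω, H k ω * G k ω ∂ℙ ≤ Φ₃ * ∑ k ∈ Icc 1 K, (α k) ^ 2 + Ψ₃ := by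
  obtain ⟨hγ0, hγ1⟩ := hγ
  have h1γ : 0 < 1 - γ := by linarith
  have hN0 : 0 < N := lt_of_lt_of_le one_pos hN
  set A : ℝ := 4 * N ^ 2 * ς * ε * Γ with hA_def
  set c : ℝ := 2 * N * ε * Γ with hc_def
  clear_value A c
  have hA0 : 0 ≤ A := by rw [hA_def]; positivity
  have hc0 : 0 < c := by rw [hc_def]; positivity
  set q : ℝ := c * γ / (1 - γ) with hq_def
  clear_value q
  have hq0 : 0 ≤ q := by rw [hq_def]; positivity
  have hq1 : q < 1 := by
    have hs3 : (1 : ℝ) < Real.sqrt 3 := by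
      have h := Real.sqrt_lt_sqrt (by norm_num : (0:ℝ) ≤ 1) (by norm_num : (1:ℝ) < 3)
      simpa using h
    have hd : 0 < 2 * Real.sqrt 3 * N * Γ * γ := by positivity
    have h5 : ε * (2 * Real.sqrt 3 * N * Γ * γ) < 1 - γ := (lt_div_iff₀ hd).mp hε'
    have h6 : c * γ ≤ ε * (2 * Real.sqrt 3 * N * Γ * γ) := by
      rw [hc_def]
      nlinarith [mul_pos (mul_pos (mul_pos hN0 hε) hΓ) hγ0]
    rw [hq_def, div_lt_one h1γ]
    exact lt_of_le_of_lt h6 h5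
  have h1q : 0 < 1 - q := by linarith
  obtain ⟨g, hg_def⟩ : ∃ g : ℕ → ℝ, g = fun k => nn2 ℙ (G k) := ⟨_, rfl⟩
  have hg : ∀ k, g k = nn2 ℙ (G k) := fun k => by rw [hg_def]
  have hgnn : ∀ k, 0 ≤ g k := fun k => by rw [hg]; exact nn2_nonneg ℙ _
  have hanti : ∀ {m n : ℕ}, m ≤ n → α n ≤ α m := fun h =>
    antitone_nat_of_succ_le hαmono h
  have hb : ∀ k, nn2 ℙ (H k) ≤ N * K₁ := fun k =>
    nn2_le_of_sq ℙ (hHL2 k) (by positivity)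
      ((hH2 k).trans_eq (mul_pow N K₁ 2).symm)
  have hE : ∀ k, ∫ ω, H k ω * G k ω ∂ℙ ≤ (N * K₁) * g k := fun k => by
    rw [hg]
    exact (integral_mul_le_nn2 ℙ (hHL2 k) (hGL2 k)).trans
      (mul_le_mul_of_nonneg_right (hb k) (nn2_nonneg ℙ _))
  -- key recursion on L² norms
  have hkey : ∀ k : ℕ, 1 ≤ k → g k ≤ A * γ ^ k + α k * (N * K₁)
      + c * ∑ r ∈ Icc 1 (k - 1), γ ^ (k - r) * g (r - 1) := by
    intro k hk
    simp only [hg]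
    set f1 : Ω → ℝ := fun _ => A * γ ^ k with hf1_def
    set f2 : Ω → ℝ := fun ω => α k * H k ω with hf2_def
    set f3 : Ω → ℝ := fun ω => c * ∑ r ∈ Icc 1 (k - 1), γ ^ (k - r) * G (r - 1) ω
      with hf3_def
    have hm1 : MemLp f1 2 ℙ := memLp_const _
    have hm2 : MemLp f2 2 ℙ := (hHL2 k).const_mul _
    have hmsum : MemLp (fun ω => ∑ r ∈ Icc 1 (k - 1), γ ^ (k - r) * G (r - 1) ω) 2 ℙ :=
      memLp_finset_sum _ fun r _ => (hGL2 (r - 1)).const_mul _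
    have hm3 : MemLp f3 2 ℙ := hmsum.const_mul _
    have hmono : nn2 ℙ (G k) ≤ nn2 ℙ (f1 + f2 + f3) := by
      refine nn2_mono ℙ ((hm1.add hm2).add hm3) ?_
      filter_upwards [hrec] with ω hω
      have h1 := hω k hk
      rw [Real.norm_eq_abs, Real.norm_eq_abs, abs_of_nonneg (hGnn k ω)]
      refine le_trans ?_ (le_abs_self _)
      simpa [hf1_def, hf2_def, hf3_def] using h1
    have e1 : nn2 ℙ f1 = A * γ ^ k := by
      rw [hf1_def, nn2_const]
      exact abs_of_nonneg (mul_nonneg hA0 (pow_nonneg hγ0.le k))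
    have e2 : nn2 ℙ f2 ≤ α k * (N * K₁) := by
      refine (nn2_smul_le ℙ (α k) (H k) (hHL2 k)).trans ?_
      rw [abs_of_pos (hαpos k)]
      exact mul_le_mul_of_nonneg_left (hb k) (hαpos k).le
    have e3 : nn2 ℙ f3 ≤ c * ∑ r ∈ Icc 1 (k - 1), γ ^ (k - r) * nn2 ℙ (G (r - 1)) := by
      refine (nn2_smul_le ℙ c _ hmsum).trans ?_
      rw [abs_of_pos hc0]
      refine mul_le_mul_of_nonneg_left ?_ hc0.le
      refine (nn2_sum_le ℙ _ _ fun r _ => (hGL2 (r - 1)).const_mul _).trans ?_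
      refine Finset.sum_le_sum fun r _ => ?_
      refine (nn2_smul_le ℙ _ _ (hGL2 (r - 1))).trans ?_
      rw [abs_of_nonneg (pow_nonneg hγ0.le _)]
    have ht1 : nn2 ℙ (f1 + f2 + f3) ≤ nn2 ℙ f1 + nn2 ℙ f2 + nn2 ℙ f3 := by
      have ha := nn2_add_le ℙ (hm1.add hm2) hm3
      have hb' := nn2_add_le ℙ hm1 hm2
      linarith
    linarith
  -- geometric bounds
  have hgeom : ∀ n : ℕ, ∑ i ∈ range n, γ ^ (i + 1) ≤ γ / (1 - γ) := by
    intro n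
    have h1 : ∑ i ∈ range n, γ ^ (i + 1) = γ * ∑ i ∈ range n, γ ^ i := by
      rw [Finset.mul_sum]; exact Finset.sum_congr rfl fun i _ => by ring
    have h2 : ∑ i ∈ range n, γ ^ i = (γ ^ n - 1) / (γ - 1) := geom_sum_eq hγ1.ne n
    have h3 : (0 : ℝ) ≤ γ ^ n := pow_nonneg hγ0.le n
    have hne : γ - 1 ≠ 0 := sub_ne_zero.mpr hγ1.ne
    have h5 : γ * ((γ ^ n - 1) / (γ - 1)) = γ * (1 - γ ^ n) / (1 - γ) := by
      field_simp
      ring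
    rw [h1, h2, h5]
    rw [div_le_div_iff₀ h1γ h1γ]
    nlinarith [mul_nonneg (mul_nonneg hγ0.le h3) h1γ.le]
  have hgeo1 : ∀ K : ℕ, ∑ k ∈ Icc 1 K, γ ^ k ≤ γ / (1 - γ) := by
    intro K
    rw [← Finset.Ico_add_one_right_eq_Icc, Finset.sum_Ico_eq_sum_range]
    have h2 : ∀ i ∈ range (K + 1 - 1), γ ^ (1 + i) = γ ^ (i + 1) := fun i _ => by
      rw [add_comm]
    rw [Finset.sum_congr rfl h2]
    exact hgeom _
  have hgeo2 : ∀ r K : ℕ, ∑ k ∈ Icc (r + 1) K, γ ^ (k - r) ≤ γ / (1 - γ) := by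
    intro r K
    rw [← Finset.Ico_add_one_right_eq_Icc, Finset.sum_Ico_eq_sum_range]
    have h2 : ∀ i ∈ range (K + 1 - (r + 1)), γ ^ (r + 1 + i - r) = γ ^ (i + 1) :=
      fun i _ => by congr 1; omega
    rw [Finset.sum_congr rfl h2]
    exact hgeom _
  refine ⟨(N * K₁) * (N * K₁) / (1 - q) + 1, ?_,
    (N * K₁) * (A * α 0 * (γ / (1 - γ)) + q * (α 0 * g 0)) / (1 - q) + 1, ?_, ?_⟩
  · have h : 0 ≤ (N * K₁) * (N * K₁) / (1 - q) := by positivity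
    linarith
  · have h : 0 ≤ (N * K₁) * (A * α 0 * (γ / (1 - γ)) + q * (α 0 * g 0)) / (1 - q) := by
      have hnum : 0 ≤ A * α 0 * (γ / (1 - γ)) + q * (α 0 * g 0) := by
        have := hgnn 0
        have := (hαpos 0).le
        positivity
      positivity
    linarith
  intro K hK
  set S2 : ℝ := ∑ k ∈ Icc 1 K, (α k) ^ 2 with hS2_def
  clear_value S2
  have hS2nn : 0 ≤ S2 := by
    rw [hS2_def]; exact Finset.sum_nonneg fun k _ => sq_nonneg _
  set S : ℝ := ∑ k ∈ Icc 1 K, α k * g k with hS_def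
  clear_value S
  -- Step A
  have hstepA : ∑ k ∈ Icc 1 K, α k * ∫ ω, H k ω * G k ω ∂ℙ ≤ (N * K₁) * S := by
    rw [hS_def, Finset.mul_sum]
    refine Finset.sum_le_sum fun k _ => ?_
    calc α k * ∫ ω, H k ω * G k ω ∂ℙ ≤ α k * ((N * K₁) * g k) :=
          mul_le_mul_of_nonneg_left (hE k) (hαpos k).le
      _ = N * K₁ * (α k * g k) := by ring
  -- Step B : bound S
  have hB1 : S ≤ ∑ k ∈ Icc 1 K, α k * (A * γ ^ k + α k * (N * K₁)
      + c * ∑ r ∈ Icc 1 (k - 1), γ ^ (k - r) * g (r - 1)) := by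
    rw [hS_def]
    exact Finset.sum_le_sum fun k hk =>
      mul_le_mul_of_nonneg_left (hkey k (mem_Icc.mp hk).1) (hαpos k).le
  have hB2 : ∑ k ∈ Icc 1 K, α k * (A * γ ^ k + α k * (N * K₁)
        + c * ∑ r ∈ Icc 1 (k - 1), γ ^ (k - r) * g (r - 1))
      = (∑ k ∈ Icc 1 K, α k * (A * γ ^ k)) + (N * K₁) * S2
        + c * ∑ k ∈ Icc 1 K, α k * ∑ r ∈ Icc 1 (k - 1), γ ^ (k - r) * g (r - 1) := by
    rw [hS2_def, Finset.mul_sum, Finset.mul_sum, ← Finset.sum_add_distrib,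
      ← Finset.sum_add_distrib]
    exact Finset.sum_congr rfl fun k _ => by ring
  obtain ⟨T, hT_def⟩ : ∃ T : ℝ,
      T = ∑ k ∈ Icc 1 K, α k * ∑ r ∈ Icc 1 (k - 1), γ ^ (k - r) * g (r - 1) := ⟨_, rfl⟩
  obtain ⟨P1, hP1_def⟩ : ∃ P1 : ℝ, P1 = ∑ k ∈ Icc 1 K, α k * (A * γ ^ k) := ⟨_, rfl⟩
  rw [← hT_def, ← hP1_def] at hB2
  have hT : T ≤ (γ / (1 - γ)) * (α 0 * g 0 + S) := by
    rw [hT_def]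
    have step1 : ∑ k ∈ Icc 1 K, α k * ∑ r ∈ Icc 1 (k - 1), γ ^ (k - r) * g (r - 1)
        = ∑ k ∈ Icc 1 K, ∑ r ∈ Icc 1 (k - 1), α k * (γ ^ (k - r) * g (r - 1)) :=
      Finset.sum_congr rfl fun k _ => Finset.mul_sum _ _ _
    have step2 : ∑ k ∈ Icc 1 K, ∑ r ∈ Icc 1 (k - 1), α k * (γ ^ (k - r) * g (r - 1))
        ≤ ∑ k ∈ Icc 1 K, ∑ r ∈ Icc 1 (k - 1), γ ^ (k - r) * (α (r - 1) * g (r - 1)) := by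
      refine Finset.sum_le_sum fun k hk => Finset.sum_le_sum fun r hr => ?_
      have h1 : α k ≤ α (r - 1) := by
        refine hanti ?_
        simp only [mem_Icc] at hk hr
        omega
      have h2 : (0:ℝ) ≤ γ ^ (k - r) := pow_nonneg hγ0.le _
      have h3 : 0 ≤ g (r - 1) := hgnn _
      nlinarith [mul_nonneg h2 h3]
    have step3 : ∑ k ∈ Icc 1 K, ∑ r ∈ Icc 1 (k - 1), γ ^ (k - r) * (α (r - 1) * g (r - 1))
        = ∑ r ∈ Icc 1 K, ∑ k ∈ Icc (r + 1) K, γ ^ (k - r) * (α (r - 1) * g (r - 1)) :=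
      Finset.sum_comm' (fun x y => by simp only [mem_Icc]; omega)
    have step4 : ∑ r ∈ Icc 1 K, ∑ k ∈ Icc (r + 1) K, γ ^ (k - r) * (α (r - 1) * g (r - 1))
        ≤ ∑ r ∈ Icc 1 K, (γ / (1 - γ)) * (α (r - 1) * g (r - 1)) := by
      refine Finset.sum_le_sum fun r _ => ?_
      rw [← Finset.sum_mul]
      exact mul_le_mul_of_nonneg_right (hgeo2 r K)
        (mul_nonneg (hαpos _).le (hgnn _))
    have step5 : ∑ r ∈ Icc 1 K, α (r - 1) * g (r - 1) ≤ α 0 * g 0 + S := by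
      have e1 : ∑ r ∈ Icc 1 K, α (r - 1) * g (r - 1)
          = ∑ i ∈ range (K + 1 - 1), α (1 + i - 1) * g (1 + i - 1) := by
        rw [← Finset.Ico_add_one_right_eq_Icc, Finset.sum_Ico_eq_sum_range]
      have e2 : (K + 1 - 1) = K := by omega
      rw [e1, e2]
      have e3 : ∀ i ∈ range K, α (1 + i - 1) * g (1 + i - 1) = α i * g i := fun i _ => by
        congr 2 <;> omega
      rw [Finset.sum_congr rfl e3]
      have hss : range K ⊆ insert 0 (Icc 1 K) := fun x hx => by
        simp only [mem_range, mem_insert, mem_Icc] at *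
        omega
      calc ∑ i ∈ range K, α i * g i
          ≤ ∑ i ∈ insert 0 (Icc 1 K), α i * g i :=
            Finset.sum_le_sum_of_subset_of_nonneg hss
              (fun i _ _ => mul_nonneg (hαpos i).le (hgnn i))
        _ = α 0 * g 0 + S := by rw [Finset.sum_insert (by simp), hS_def]
    calc ∑ k ∈ Icc 1 K, α k * ∑ r ∈ Icc 1 (k - 1), γ ^ (k - r) * g (r - 1)
        = ∑ k ∈ Icc 1 K, ∑ r ∈ Icc 1 (k - 1), α k * (γ ^ (k - r) * g (r - 1)) := step1
      _ ≤ ∑ k ∈ Icc 1 K, ∑ r ∈ Icc 1 (k - 1), γ ^ (k - r) * (α (r - 1) * g (r - 1)) := step2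
      _ = ∑ r ∈ Icc 1 K, ∑ k ∈ Icc (r + 1) K, γ ^ (k - r) * (α (r - 1) * g (r - 1)) := step3
      _ ≤ ∑ r ∈ Icc 1 K, (γ / (1 - γ)) * (α (r - 1) * g (r - 1)) := step4
      _ = (γ / (1 - γ)) * ∑ r ∈ Icc 1 K, α (r - 1) * g (r - 1) := (Finset.mul_sum _ _ _).symm
      _ ≤ (γ / (1 - γ)) * (α 0 * g 0 + S) :=
          mul_le_mul_of_nonneg_left step5 (by positivity)
  have hT1 : P1 ≤ A * α 0 * (γ / (1 - γ)) := by
    rw [hP1_def]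
    calc ∑ k ∈ Icc 1 K, α k * (A * γ ^ k) ≤ ∑ k ∈ Icc 1 K, (A * α 0) * γ ^ k := by
          refine Finset.sum_le_sum fun k _ => ?_
          have h1 := hanti (Nat.zero_le k)
          have h2 : (0:ℝ) ≤ γ ^ k := pow_nonneg hγ0.le k
          nlinarith [mul_nonneg hA0 h2]
      _ = (A * α 0) * ∑ k ∈ Icc 1 K, γ ^ k := (Finset.mul_sum _ _ _).symm
      _ ≤ (A * α 0) * (γ / (1 - γ)) := mul_le_mul_of_nonneg_left (hgeo1 K)
          (mul_nonneg hA0 (hαpos 0).le)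
      _ = A * α 0 * (γ / (1 - γ)) := by ring
  have hmain : S ≤ A * α 0 * (γ / (1 - γ)) + (N * K₁) * S2 + q * (α 0 * g 0 + S) := by
    have hcT : c * ((γ / (1 - γ)) * (α 0 * g 0 + S)) = q * (α 0 * g 0 + S) := by
      rw [hq_def]; ring
    have h4 := mul_le_mul_of_nonneg_left hT hc0.le
    have h5 := hB1.trans_eq hB2
    linarith
  have hq_S : S * (1 - q) ≤ A * α 0 * (γ / (1 - γ)) + q * (α 0 * g 0) + (N * K₁) * S2 := by
    have hexp : q * (α 0 * g 0 + S) = q * (α 0 * g 0) + q * S := by ring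
    nlinarith [hmain]
  have hfin : (N * K₁) * S ≤ ((N * K₁) * (N * K₁) / (1 - q)) * S2
      + (N * K₁) * (A * α 0 * (γ / (1 - γ)) + q * (α 0 * g 0)) / (1 - q) := by
    have h1 : S ≤ (A * α 0 * (γ / (1 - γ)) + q * (α 0 * g 0) + (N * K₁) * S2) / (1 - q) :=
      (le_div_iff₀ h1q).mpr hq_S
    have h2 : (N * K₁) * S
        ≤ (N * K₁) * ((A * α 0 * (γ / (1 - γ)) + q * (α 0 * g 0) + (N * K₁) * S2) / (1 - q)) :=
      mul_le_mul_of_nonneg_left h1 (by positivity)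
    have h3 : (N * K₁) * ((A * α 0 * (γ / (1 - γ)) + q * (α 0 * g 0) + (N * K₁) * S2) / (1 - q))
        = ((N * K₁) * (N * K₁) / (1 - q)) * S2
          + (N * K₁) * (A * α 0 * (γ / (1 - γ)) + q * (α 0 * g 0)) / (1 - q) := by
      field_simp
      ring
    linarith
  have hlast : ((N * K₁) * (N * K₁) / (1 - q)) * S2
      + (N * K₁) * (A * α 0 * (γ / (1 - γ)) + q * (α 0 * g 0)) / (1 - q)
      ≤ ((N * K₁) * (N * K₁) / (1 - q) + 1) * S2
        + ((N * K₁) * (A * α 0 * (γ / (1 - γ)) + q * (α 0 * g 0)) / (1 - q) + 1) := by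
    have hexp : ((N * K₁) * (N * K₁) / (1 - q) + 1) * S2
        = ((N * K₁) * (N * K₁) / (1 - q)) * S2 + S2 := by ring
    linarith
  exact hstepA.trans (hfin.trans hlast)
end

section
/- Let (α_k)_{k≥0} be a positive non-increasing real sequence, let (e_k)_{k≥0} and (a_k)_{k≥0} be nonnegative real sequences, and let N ≥ 1, ς ≥ 0, Γ > 0, γ ∈ (0,1), Φ₁ ≥ 0, Ψ₁ ≥ 0 be constants. Assume: (i) for all k ≥ 1, e_k ≤ 2NςΓγ^k + Γ Σ_{r=1}^{k−1} γ^{k−r} a_{r−1} + a_{k−1}; and (ii) for all K ≥ 0, Σ_{k=0}^{K} α_k a_k ≤ Φ₁ Σ_{k=0}^{K} α_k² + Ψ₁. Then for all k ≥ 1: (Σ_{ℓ=0}^{k} α_ℓ e_ℓ)/(Σ_{ℓ=0}^{k} α_ℓ) ≤ [(Σ_{ℓ=0}^{k} α_ℓ²)/(Σ_{ℓ=0}^{k} α_ℓ)]·[NςΓ + Φ₁(1 + Γγ/(1−γ))] + [1/(Σ_{ℓ=0}^{k} α_ℓ)]·[α₀e₀ + NςΓγ²/(1−γ²) + Ψ₁(1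 + Γγ/(1−γ))]. -/
open Finset

lemma geom_aux {γ : ℝ} (h0 : 0 ≤ γ) (h1 : γ < 1) (n : ℕ) :
    ∑ i ∈ range n, γ ^ i ≤ 1 / (1 - γ) := by
  rw [geom_sum_eq h1.ne]
  rw [show (γ ^ n - 1) / (γ - 1) = (1 - γ ^ n) / (1 - γ) by
    rw [← neg_div_neg_eq]; ring_nf]
  gcongr
  · have := pow_nonneg h0 n; linarith

lemma geom_aux2 {γ : ℝ} (h0 : 0 ≤ γ) (h1 : γ < 1) (n : ℕ) :
    ∑ i ∈ range n, γ ^ (i + 1) ≤ γ / (1 - γ) := by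
  simp_rw [pow_succ']
  rw [← mul_sum]
  calc γ * ∑ i ∈ range n, γ ^ i ≤ γ * (1 / (1 - γ)) := by
        apply mul_le_mul_of_nonneg_left (geom_aux h0 h1 n) h0
    _ = γ / (1 - γ) := by ring

lemma swap_aux (k : ℕ) (F : ℕ → ℕ → ℝ) :
    ∑ i ∈ range k, ∑ r ∈ Icc 1 i, F i r
      = ∑ r ∈ Ico 1 k, ∑ i ∈ Ico r k, F i r := by
  have h1 : ∑ i ∈ range k, ∑ r ∈ Icc 1 i, F i r
      = ∑ i ∈ Ico 1 k, ∑ r ∈ Icc 1 i, F i r := by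
    rw [range_eq_Ico]
    refine (Finset.sum_subset (Finset.Ico_subset_Ico (Nat.zero_le 1) le_rfl) ?_).symm
    intro x hx hnx
    have : x = 0 := by simp at hx hnx; omega
    subst this; simp
  rw [h1]
  simp_rw [← Finset.Ico_add_one_right_eq_Icc]
  exact (Finset.sum_Ico_Ico_comm 1 k (fun r i => F i r)).symm

/-- Proposition 1-(1): bound on the weighted average of the consensus errors. -/
theorem stmt_7 (α e a : ℕ → ℝ)
    (hαpos : ∀ k, 0 < α k) (hαmono : ∀ k, α (k + 1) ≤ α k)
    (henn : ∀ k, 0 ≤ e k) (hann : ∀ k, 0 ≤ a k)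
    (N ς Γ γ Φ₁ Ψ₁ : ℝ) (hN : 1 ≤ N) (hς : 0 ≤ ς) (hΓ : 0 < Γ)
    (hγ : γ ∈ Set.Ioo (0 : ℝ) 1) (hΦ₁ : 0 ≤ Φ₁) (hΨ₁ : 0 ≤ Ψ₁)
    (hbound : ∀ k : ℕ, 1 ≤ k →
      e k ≤ 2 * N * ς * Γ * γ ^ k
        + Γ * ∑ r ∈ Icc 1 (k - 1), γ ^ (k - r) * a (r - 1) + a (k - 1))
    (hsum : ∀ K : ℕ, ∑ k ∈ range (K + 1), α k * a k
      ≤ Φ₁ * ∑ k ∈ range (K + 1), (α k) ^ 2 + Ψ₁) :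
    ∀ k : ℕ, 1 ≤ k →
      (∑ ℓ ∈ range (k + 1), α ℓ * e ℓ) / (∑ ℓ ∈ range (k + 1), α ℓ) ≤
        ((∑ ℓ ∈ range (k + 1), (α ℓ) ^ 2) / (∑ ℓ ∈ range (k + 1), α ℓ)) *
            (N * ς * Γ + Φ₁ * (1 + Γ * γ / (1 - γ)))
        + (1 / (∑ ℓ ∈ range (k + 1), α ℓ)) *
            (α 0 * e 0 + N * ς * Γ * γ ^ 2 / (1 - γ ^ 2)
              + Ψ₁ * (1 + Γ * γ / (1 - γ))) := by
  obtain ⟨hγ0, hγ1⟩ := hγ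
  intro k hk
  set S : ℝ := ∑ ℓ ∈ range (k + 1), α ℓ with hS
  set A : ℝ := ∑ ℓ ∈ range (k + 1), (α ℓ) ^ 2 with hA
  have hSpos : 0 < S := Finset.sum_pos (fun i _ => hαpos i) ⟨0, by simp⟩
  set C : ℝ := N * ς * Γ + Φ₁ * (1 + Γ * γ / (1 - γ)) with hC
  set B : ℝ := α 0 * e 0 + N * ς * Γ * γ ^ 2 / (1 - γ ^ 2)
      + Ψ₁ * (1 + Γ * γ / (1 - γ)) with hB
  have hanti : Antitone α := antitone_nat_of_succ_le hαmono
  have hNςΓ : 0 ≤ N * ς * Γ := by positivity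
  -- bound for weighted a-sums
  have hasum : ∀ m : ℕ, m ≤ k + 1 → ∑ j ∈ range m, α j * a j ≤ Φ₁ * A + Ψ₁ := by
    intro m hm
    calc ∑ j ∈ range m, α j * a j ≤ ∑ j ∈ range (k + 1), α j * a j := by
          apply Finset.sum_le_sum_of_subset_of_nonneg (Finset.range_subset_range.2 hm)
          intro i _ _
          exact mul_nonneg (hαpos i).le (hann i)
      _ ≤ Φ₁ * A + Ψ₁ := hsum k
  -- key termwise bound
  have key : ∀ i : ℕ, α (i + 1) * e (i + 1)
      ≤ N * ς * Γ * ((α (i + 1)) ^ 2 + (γ ^ 2) ^ (i + 1))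
        + Γ * ∑ r ∈ Icc 1 i, γ ^ (i + 1 - r) * (α (r - 1) * a (r - 1))
        + α i * a i := by
    intro i
    have h1 := hbound (i + 1) (Nat.le_add_left 1 i)
    simp only [Nat.add_sub_cancel] at h1
    have hα1 : (0:ℝ) ≤ α (i + 1) := (hαpos _).le
    calc α (i + 1) * e (i + 1)
        ≤ α (i + 1) * (2 * N * ς * Γ * γ ^ (i + 1)
            + Γ * ∑ r ∈ Icc 1 i, γ ^ (i + 1 - r) * a (r - 1) + a i) :=
          mul_le_mul_of_nonneg_left h1 hα1
      _ = N * ς * Γ * (2 * α (i + 1) * γ ^ (i + 1))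
            + Γ * ∑ r ∈ Icc 1 i, γ ^ (i + 1 - r) * (α (i + 1) * a (r - 1))
            + α (i + 1) * a i := by
          have hterm : ∀ r : ℕ, α (i + 1) * (γ ^ (i + 1 - r) * a (r - 1))
              = γ ^ (i + 1 - r) * (α (i + 1) * a (r - 1)) := fun r => by ring
          rw [mul_add, mul_add, mul_left_comm (α (i + 1)) Γ, Finset.mul_sum]
          simp_rw [hterm]
          ring
      _ ≤ N * ς * Γ * ((α (i + 1)) ^ 2 + (γ ^ 2) ^ (i + 1))
            + Γ * ∑ r ∈ Icc 1 i, γ ^ (i + 1 - r) * (α (r - 1) * a (r - 1))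
            + α i * a i := by
          refine add_le_add (add_le_add ?_ ?_) ?_
          · apply mul_le_mul_of_nonneg_left _ hNςΓ
            rw [show ((γ:ℝ) ^ 2) ^ (i + 1) = (γ ^ (i + 1)) ^ 2 by
              rw [← pow_mul, ← pow_mul, Nat.mul_comm]]
            exact two_mul_le_add_sq (α (i + 1)) (γ ^ (i + 1))
          · apply mul_le_mul_of_nonneg_left _ hΓ.le
            apply Finset.sum_le_sum
            intro r hr
            have hr' := Finset.mem_Icc.mp hr
            have hle : α (i + 1) ≤ α (r - 1) := hanti (by omega)
            have h2 : (0:ℝ) ≤ γ ^ (i + 1 - r) := pow_nonneg hγ0.le _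
            exact mul_le_mul_of_nonneg_left
              (mul_le_mul_of_nonneg_right hle (hann _)) h2
          · exact mul_le_mul_of_nonneg_right (hαmono i) (hann i)
  -- sum the key bound
  have main : ∑ ℓ ∈ range (k + 1), α ℓ * e ℓ ≤ A * C + B := by
    rw [Finset.sum_range_succ']
    have T1 : ∑ i ∈ range k, (α (i + 1)) ^ 2 ≤ A := by
      have : A = (∑ i ∈ range k, (α (i + 1)) ^ 2) + (α 0) ^ 2 :=
        Finset.sum_range_succ' (fun ℓ => (α ℓ) ^ 2) k
      nlinarith [sq_nonneg (α 0)]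
    have T1' : ∑ i ∈ range k, (γ ^ 2) ^ (i + 1) ≤ γ ^ 2 / (1 - γ ^ 2) := by
      apply geom_aux2 (by positivity)
      nlinarith
    have T2 : ∑ i ∈ range k, ∑ r ∈ Icc 1 i, γ ^ (i + 1 - r) * (α (r - 1) * a (r - 1))
        ≤ γ / (1 - γ) * (Φ₁ * A + Ψ₁) := by
      rw [swap_aux]
      have inner : ∀ r ∈ Ico 1 k,
          ∑ i ∈ Ico r k, γ ^ (i + 1 - r) * (α (r - 1) * a (r - 1))
            ≤ γ / (1 - γ) * (α (r - 1) * a (r - 1)) := by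
        intro r hr
        rw [← Finset.sum_mul]
        apply mul_le_mul_of_nonneg_right _ (mul_nonneg (hαpos _).le (hann _))
        rw [Finset.sum_Ico_eq_sum_range]
        have : ∀ i, γ ^ (r + i + 1 - r) = γ ^ (i + 1) := by
          intro i; congr 1; omega
        simp_rw [this]
        exact geom_aux2 hγ0.le hγ1 _
      calc ∑ r ∈ Ico 1 k, ∑ i ∈ Ico r k, γ ^ (i + 1 - r) * (α (r - 1) * a (r - 1))
          ≤ ∑ r ∈ Ico 1 k, γ / (1 - γ) * (α (r - 1) * a (r - 1)) :=
            Finset.sum_le_sum inner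
        _ = γ / (1 - γ) * ∑ r ∈ Ico 1 k, α (r - 1) * a (r - 1) := by
            rw [Finset.mul_sum]
        _ ≤ γ / (1 - γ) * (Φ₁ * A + Ψ₁) := by
            apply mul_le_mul_of_nonneg_left _ (div_nonneg hγ0.le (by linarith))
            rw [Finset.sum_Ico_eq_sum_range]
            have : ∀ i, (1 + i - 1 : ℕ) = i := fun i => by omega
            simp_rw [this]
            exact hasum (k - 1) (by omega)
    have T3 : ∑ i ∈ range k, α i * a i ≤ Φ₁ * A + Ψ₁ := hasum k (by omega)
    calc (∑ i ∈ range k, α (i + 1) * e (i + 1)) + α 0 * e 0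
        ≤ (∑ i ∈ range k, (N * ς * Γ * ((α (i + 1)) ^ 2 + (γ ^ 2) ^ (i + 1))
            + Γ * ∑ r ∈ Icc 1 i, γ ^ (i + 1 - r) * (α (r - 1) * a (r - 1))
            + α i * a i)) + α 0 * e 0 := by
          gcongr with i hi
          exact key i
      _ = N * ς * Γ * (∑ i ∈ range k, (α (i + 1)) ^ 2)
            + N * ς * Γ * (∑ i ∈ range k, (γ ^ 2) ^ (i + 1))
            + Γ * (∑ i ∈ range k, ∑ r ∈ Icc 1 i, γ ^ (i + 1 - r) * (α (r - 1) * a (r - 1)))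
            + (∑ i ∈ range k, α i * a i) + α 0 * e 0 := by
          simp only [Finset.sum_add_distrib, Finset.mul_sum, mul_add]
      _ ≤ N * ς * Γ * A + N * ς * Γ * (γ ^ 2 / (1 - γ ^ 2))
            + Γ * (γ / (1 - γ) * (Φ₁ * A + Ψ₁))
            + (Φ₁ * A + Ψ₁) + α 0 * e 0 := by
          gcongr
      _ = A * C + B := by
          rw [hC, hB]; ring
  -- conclude by dividing
  have hrhs : (A / S) * C + (1 / S) * B = (A * C + B) / S := by
    field_simp
  rw [hrhs]
  exact (div_le_div_iff_of_pos_right hSpos).mpr main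
end

section
/- Let X ⊆ ℝⁿ be a nonempty closed set, let f : ℝⁿ → ℝ be continuous, let f⋆ = inf_{x∈X} f(x) be finite, and suppose the solution set X⋆ = {x ∈ X : f(x) = f⋆} is nonempty. Let (z_k)_{k≥0} be a sequence in X such that: (i) for every z⋆ ∈ X⋆ the real sequence ‖z_k − z⋆‖ converges; and (ii) liminf_{k→∞} f(z_k) = f⋆. Then there exists x⋆ ∈ X⋆ such that z_k converges to x⋆. -/
open Filter

/-- Step (C) in Theorem 1: a sequence in `X` whose distances to every optimizer converge
and whose function values have liminf equal to the optimal value converges to an optimizer. -/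
theorem stmt_10 (n : ℕ) (X : Set (EuclideanSpace ℝ (Fin n)))
    (hXne : X.Nonempty) (hXcl : IsClosed X)
    (f : EuclideanSpace ℝ (Fin n) → ℝ) (hf : Continuous f)
    (fstar : ℝ) (hfstar : IsGLB (f '' X) fstar)
    (hXstar : {x | x ∈ X ∧ f x = fstar}.Nonempty)
    (z : ℕ → EuclideanSpace ℝ (Fin n)) (hzX : ∀ k, z k ∈ X)
    (hdist : ∀ zs ∈ {x | x ∈ X ∧ f x = fstar},
      ∃ L : ℝ, Tendsto (fun k => ‖z k - zs‖) atTop (nhds L))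
    (hliminf : liminf (fun k => f (z k)) atTop = fstar) :
    ∃ xs ∈ {x | x ∈ X ∧ f x = fstar}, Tendsto z atTop (nhds xs) := by
  -- lower bound on f(z k)
  have hlb : ∀ k, fstar ≤ f (z k) := fun k => hfstar.1 ⟨z k, hzX k, rfl⟩
  -- boundedness of the sequence
  obtain ⟨zs, hzs⟩ := hXstar
  obtain ⟨L, hL⟩ := hdist zs hzs
  obtain ⟨C, hC⟩ : ∃ C, ∀ k, ‖z k - zs‖ ≤ C := by
    obtain ⟨C, hC⟩ := hL.bddAbove_range
    exact ⟨C, fun k => hC ⟨k, rfl⟩⟩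
  have hball : ∀ k, z k ∈ Metric.closedBall zs C := by
    intro k
    rw [Metric.mem_closedBall, dist_eq_norm]
    exact hC k
  obtain ⟨M, hM⟩ : ∃ M, ∀ k, f (z k) ≤ M := by
    obtain ⟨M, hM⟩ := ((isCompact_closedBall zs C).image hf).bddAbove
    exact ⟨M, fun k => hM ⟨z k, hball k, rfl⟩⟩
  have hbdd : IsCoboundedUnder (· ≥ ·) atTop (fun k => f (z k)) :=
    isCoboundedUnder_ge_of_le atTop hM
  -- extract subsequence with f values converging to fstar
  have hfreq : ∀ m : ℕ, ∃ᶠ k in atTop, f (z k) < fstar + 1 / (m + 1) := by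
    intro m
    apply Filter.frequently_lt_of_liminf_lt hbdd
    rw [hliminf]
    have : (0:ℝ) < 1 / (m + 1) := by positivity
    linarith
  obtain ⟨φ, hφmono, hφ⟩ := Filter.extraction_forall_of_frequently hfreq
  have hfφ : Tendsto (fun m => f (z (φ m))) atTop (nhds fstar) := by
    have hup : Tendsto (fun m : ℕ => fstar + 1 / (m + 1 : ℝ)) atTop (nhds fstar) := by
      have h := (tendsto_const_nhds (x := fstar) (f := atTop (α := ℕ))).add
        tendsto_one_div_add_atTop_nhds_zero_nat
      simpa using h
    exact tendsto_of_tendsto_of_tendsto_of_le_of_le tendsto_const_nhds hup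
      (fun m => hlb (φ m)) (fun m => (hφ m).le)
  obtain ⟨x, -, ψ, hψmono, hψ⟩ :=
    tendsto_subseq_of_bounded Metric.isBounded_closedBall (fun m => hball (φ m))
  -- x is an optimizer
  have hxX : x ∈ X := hXcl.mem_of_tendsto hψ (Eventually.of_forall fun j => hzX _)
  have hfx : f x = fstar := by
    have h1 : Tendsto (fun j => f (z (φ (ψ j)))) atTop (nhds (f x)) :=
      (hf.continuousAt.tendsto).comp hψ
    have h2 : Tendsto (fun j => f (z (φ (ψ j)))) atTop (nhds fstar) :=
      hfφ.comp hψmono.tendsto_atTop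
    exact tendsto_nhds_unique h1 h2
  have hxmem : x ∈ {x | x ∈ X ∧ f x = fstar} := ⟨hxX, hfx⟩
  -- distance to x converges, and to 0 along the subsequence
  obtain ⟨L', hL'⟩ := hdist x hxmem
  have h0 : Tendsto (fun j => ‖z (φ (ψ j)) - x‖) atTop (nhds 0) := by
    have := (tendsto_sub_nhds_zero_iff.mpr hψ).norm
    simpa using this
  have hL'sub : Tendsto (fun j => ‖z (φ (ψ j)) - x‖) atTop (nhds L') :=
    hL'.comp ((hφmono.comp hψmono).tendsto_atTop)
  have : L' = 0 := tendsto_nhds_unique hL'sub h0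
  subst this
  refine ⟨x, hxmem, ?_⟩
  rw [← tendsto_sub_nhds_zero_iff]
  exact tendsto_zero_iff_norm_tendsto_zero.mpr hL'
end

section
/- Let α > 0, p₁ > 1, p > 1 and C₀, C₁, C₂, C₃, C₄ ≥ 0. For t ≥ 1 define α_k = α/√(k+2) for k = 0,…,t−1 and B_t = (Σ_{k=0}^{t−1} α_k)^{−1} · [C₀ + C₁ Σ_{k=0}^{t−1} α_k² + C₂ Σ_{k=0}^{t−1} α_k (k+2)^{−p₁} + C₃ Σ_{k=0}^{t−1} α_k (k+2)^{−p} + C₄ (Σ_{k=0}^{t−1} α_k²)(Σ_{k=0}^{t−1} (k+2)^{−p})]. Then there exists a constant C > 0 such that for all t ≥ 2: B_t ≤ C · (ln t)/√t. -/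
open Finset

/-- Summability of the shifted `p`-series. -/
lemma summ_aux (q : ℝ) (hq : 1 < q) : Summable (fun n : ℕ => ((n : ℝ) + 2) ^ (-q)) := by
  have h : Summable (fun n : ℕ => (n : ℝ) ^ (-q)) :=
    (Real.summable_nat_rpow).mpr (by linarith)
  have h2 := (summable_nat_add_iff 2).mpr h
  refine h2.congr fun n => ?_
  push_cast
  ring_nf

/-- Harmonic-type sum bounded by a logarithm. -/
lemma harm_aux (t : ℕ) : ∑ k ∈ range t, (1 : ℝ) / ((k : ℝ) + 2) ≤ Real.log ((t : ℝ) + 1) := by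
  calc ∑ k ∈ range t, (1 : ℝ) / ((k : ℝ) + 2)
      ≤ ∑ k ∈ range t,
          ((fun i : ℕ => Real.log ((i : ℝ) + 1)) (k + 1)
            - (fun i : ℕ => Real.log ((i : ℝ) + 1)) k) := by
        apply Finset.sum_le_sum
        intro k _
        simp only
        have h1 : (0 : ℝ) < (k : ℝ) + 1 := by positivity
        have h2 : (0 : ℝ) < (k : ℝ) + 2 := by positivity
        have hlog := Real.log_le_sub_one_of_pos
          (show (0 : ℝ) < ((k : ℝ) + 1) / ((k : ℝ) + 2) by positivity)
        rw [Real.log_div (by linarith) (by linarith)] at hlog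
        have he : ((k : ℝ) + 1) / ((k : ℝ) + 2) - 1 = -(1 / ((k : ℝ) + 2)) := by
          field_simp
          norm_num
        rw [he] at hlog
        push_cast
        have hcast : ((k : ℝ) + 1 + 1) = (k : ℝ) + 2 := by ring
        rw [hcast]
        linarith
    _ = Real.log ((t : ℝ) + 1) := by
        rw [Finset.sum_range_sub (f := fun i : ℕ => Real.log ((i : ℝ) + 1)) t]
        simp

set_option maxHeartbeats 1000000 in
/-- Corollary 1-(1): with diminishing step-size `α_k = α/√(k+2)` the bound is `O(ln t/√t)`. -/
theorem stmt_13 (α p₁ p : ℝ) (hα : 0 < α) (hp₁ : 1 < p₁) (hp : 1 < p)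
    (C₀ C₁ C₂ C₃ C₄ : ℝ) (hC₀ : 0 ≤ C₀) (hC₁ : 0 ≤ C₁) (hC₂ : 0 ≤ C₂)
    (hC₃ : 0 ≤ C₃) (hC₄ : 0 ≤ C₄) :
    ∃ C > (0 : ℝ), ∀ t : ℕ, 2 ≤ t →
      (C₀ + C₁ * ∑ k ∈ range t, (α / Real.sqrt ((k : ℝ) + 2)) ^ 2
          + C₂ * ∑ k ∈ range t, (α / Real.sqrt ((k : ℝ) + 2)) * ((k : ℝ) + 2) ^ (-p₁)
          + C₃ * ∑ k ∈ range t, (α / Real.sqrt ((k : ℝ) + 2)) * ((k : ℝ) + 2) ^ (-p)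
          + C₄ * (∑ k ∈ range t, (α / Real.sqrt ((k : ℝ) + 2)) ^ 2)
              * ∑ k ∈ range t, ((k : ℝ) + 2) ^ (-p))
        / (∑ k ∈ range t, α / Real.sqrt ((k : ℝ) + 2))
      ≤ C * Real.log t / Real.sqrt t := by
  have hsum₁ := summ_aux p₁ hp₁
  have hsump := summ_aux p hp
  set K₁ : ℝ := ∑' n : ℕ, ((n : ℝ) + 2) ^ (-p₁) with hK₁def
  set Kp : ℝ := ∑' n : ℕ, ((n : ℝ) + 2) ^ (-p) with hKpdef
  have hK₁ : 0 ≤ K₁ := tsum_nonneg fun n => by positivity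
  have hKp : 0 ≤ Kp := tsum_nonneg fun n => by positivity
  have hlog2 : 0 < Real.log 2 := Real.log_pos (by norm_num)
  set A : ℝ := C₀ + α * C₂ * K₁ + α * C₃ * Kp with hAdef
  have hA : 0 ≤ A := by positivity
  set M : ℝ := A / Real.log 2 + 2 * α ^ 2 * C₁ + 2 * α ^ 2 * C₄ * Kp with hMdef
  have hM : 0 ≤ M := by positivity
  refine ⟨M * Real.sqrt 2 / α + 1, by positivity, ?_⟩
  intro t ht
  have ht2 : (2 : ℝ) ≤ (t : ℝ) := by exact_mod_cast ht
  have htpos : (0 : ℝ) < (t : ℝ) := by linarith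
  have hlogt : Real.log 2 ≤ Real.log t := Real.log_le_log (by norm_num) ht2
  have hL : 0 ≤ Real.log t := le_trans hlog2.le hlogt
  -- denominator lower bound
  have hDlow : α * Real.sqrt t / Real.sqrt 2 ≤ ∑ k ∈ range t, α / Real.sqrt ((k : ℝ) + 2) := by
    have h1 : ∀ k ∈ range t, α / Real.sqrt ((t : ℝ) + 1) ≤ α / Real.sqrt ((k : ℝ) + 2) := by
      intro k hk
      have hk' : (k : ℝ) + 2 ≤ (t : ℝ) + 1 := by
        have hkt : k < t := mem_range.mp hk
        have : (k : ℝ) + 1 ≤ (t : ℝ) := by exact_mod_cast hkt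
        linarith
      gcongr
    calc α * Real.sqrt t / Real.sqrt 2
        ≤ (t : ℝ) * (α / Real.sqrt ((t : ℝ) + 1)) := by
          rw [mul_div_assoc' (t : ℝ), div_le_div_iff₀ (by positivity) (by positivity)]
          have hst : Real.sqrt t * Real.sqrt ((t : ℝ) + 1) ≤ Real.sqrt 2 * (t : ℝ) := by
            have h1 : Real.sqrt ((t : ℝ) * ((t : ℝ) + 1)) ≤ Real.sqrt (2 * (t : ℝ) ^ 2) :=
              Real.sqrt_le_sqrt (by nlinarith)
            rwa [Real.sqrt_mul htpos.le, Real.sqrt_mul (by norm_num : (0:ℝ) ≤ 2),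
              Real.sqrt_sq htpos.le] at h1
          nlinarith [Real.sqrt_nonneg ((t : ℝ) + 1), Real.sqrt_nonneg (t : ℝ), hα.le]
      _ ≤ ∑ k ∈ range t, α / Real.sqrt ((k : ℝ) + 2) := by
          have := Finset.card_nsmul_le_sum (range t)
            (fun k => α / Real.sqrt ((k : ℝ) + 2)) (α / Real.sqrt ((t : ℝ) + 1)) h1
          simpa [nsmul_eq_mul] using this
  have hDpos : 0 < ∑ k ∈ range t, α / Real.sqrt ((k : ℝ) + 2) :=
    lt_of_lt_of_le (by positivity) hDlow
  -- numerator pieces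
  have hS2 : ∑ k ∈ range t, (α / Real.sqrt ((k : ℝ) + 2)) ^ 2 ≤ 2 * α ^ 2 * Real.log t := by
    calc ∑ k ∈ range t, (α / Real.sqrt ((k : ℝ) + 2)) ^ 2
        = α ^ 2 * ∑ k ∈ range t, (1 : ℝ) / ((k : ℝ) + 2) := by
          rw [Finset.mul_sum]
          refine Finset.sum_congr rfl fun k _ => ?_
          rw [div_pow, Real.sq_sqrt (by positivity)]
          ring
      _ ≤ α ^ 2 * Real.log ((t : ℝ) + 1) :=
          mul_le_mul_of_nonneg_left (harm_aux t) (by positivity)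
      _ ≤ 2 * α ^ 2 * Real.log t := by
          have h1 : Real.log ((t : ℝ) + 1) ≤ 2 * Real.log t := by
            have h2 := Real.log_le_log (by positivity)
              (show (t : ℝ) + 1 ≤ (t : ℝ) ^ 2 by nlinarith)
            rwa [Real.log_pow, Nat.cast_ofNat] at h2
          nlinarith [sq_nonneg α]
  have hone_le : ∀ k : ℕ, (1 : ℝ) ≤ Real.sqrt ((k : ℝ) + 2) := by
    intro k
    rw [show (1 : ℝ) = Real.sqrt 1 by simp]
    exact Real.sqrt_le_sqrt (by linarith [Nat.cast_nonneg (α := ℝ) k])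
  have hSp1 : ∑ k ∈ range t, (α / Real.sqrt ((k : ℝ) + 2)) * ((k : ℝ) + 2) ^ (-p₁)
      ≤ α * K₁ := by
    calc ∑ k ∈ range t, (α / Real.sqrt ((k : ℝ) + 2)) * ((k : ℝ) + 2) ^ (-p₁)
        ≤ ∑ k ∈ range t, α * ((k : ℝ) + 2) ^ (-p₁) := by
          refine Finset.sum_le_sum fun k _ => ?_
          exact mul_le_mul_of_nonneg_right (div_le_self hα.le (hone_le k))
            (Real.rpow_nonneg (by positivity) _)
      _ = α * ∑ k ∈ range t, ((k : ℝ) + 2) ^ (-p₁) := (by rw [Finset.mul_sum])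
      _ ≤ α * K₁ := mul_le_mul_of_nonneg_left
          (Summable.sum_le_tsum (range t) (fun i _ => by positivity) hsum₁) hα.le
  have hSp : ∑ k ∈ range t, (α / Real.sqrt ((k : ℝ) + 2)) * ((k : ℝ) + 2) ^ (-p)
      ≤ α * Kp := by
    calc ∑ k ∈ range t, (α / Real.sqrt ((k : ℝ) + 2)) * ((k : ℝ) + 2) ^ (-p)
        ≤ ∑ k ∈ range t, α * ((k : ℝ) + 2) ^ (-p) := by
          refine Finset.sum_le_sum fun k _ => ?_
          exact mul_le_mul_of_nonneg_right (div_le_self hα.le (hone_le k))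
            (Real.rpow_nonneg (by positivity) _)
      _ = α * ∑ k ∈ range t, ((k : ℝ) + 2) ^ (-p) := (by rw [Finset.mul_sum])
      _ ≤ α * Kp := mul_le_mul_of_nonneg_left
          (Summable.sum_le_tsum (range t) (fun i _ => by positivity) hsump) hα.le
  have hSpp : ∑ k ∈ range t, ((k : ℝ) + 2) ^ (-p) ≤ Kp :=
    Summable.sum_le_tsum (range t) (fun i _ => by positivity) hsump
  have hS2nn : 0 ≤ ∑ k ∈ range t, (α / Real.sqrt ((k : ℝ) + 2)) ^ 2 := by positivity
  have hSppnn : 0 ≤ ∑ k ∈ range t, ((k : ℝ) + 2) ^ (-p) := by positivity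
  -- numerator total bound
  have hN : C₀ + C₁ * ∑ k ∈ range t, (α / Real.sqrt ((k : ℝ) + 2)) ^ 2
      + C₂ * ∑ k ∈ range t, (α / Real.sqrt ((k : ℝ) + 2)) * ((k : ℝ) + 2) ^ (-p₁)
      + C₃ * ∑ k ∈ range t, (α / Real.sqrt ((k : ℝ) + 2)) * ((k : ℝ) + 2) ^ (-p)
      + C₄ * (∑ k ∈ range t, (α / Real.sqrt ((k : ℝ) + 2)) ^ 2)
          * ∑ k ∈ range t, ((k : ℝ) + 2) ^ (-p)
      ≤ M * Real.log t := by
    have b1 : C₁ * ∑ k ∈ range t, (α / Real.sqrt ((k : ℝ) + 2)) ^ 2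
        ≤ C₁ * (2 * α ^ 2 * Real.log t) := mul_le_mul_of_nonneg_left hS2 hC₁
    have b2 : C₂ * ∑ k ∈ range t, (α / Real.sqrt ((k : ℝ) + 2)) * ((k : ℝ) + 2) ^ (-p₁)
        ≤ C₂ * (α * K₁) := mul_le_mul_of_nonneg_left hSp1 hC₂
    have b3 : C₃ * ∑ k ∈ range t, (α / Real.sqrt ((k : ℝ) + 2)) * ((k : ℝ) + 2) ^ (-p)
        ≤ C₃ * (α * Kp) := mul_le_mul_of_nonneg_left hSp hC₃
    have b4 : C₄ * (∑ k ∈ range t, (α / Real.sqrt ((k : ℝ) + 2)) ^ 2)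
        * ∑ k ∈ range t, ((k : ℝ) + 2) ^ (-p)
        ≤ C₄ * (2 * α ^ 2 * Real.log t) * Kp := by
      have h5 : (∑ k ∈ range t, (α / Real.sqrt ((k : ℝ) + 2)) ^ 2)
          * ∑ k ∈ range t, ((k : ℝ) + 2) ^ (-p)
          ≤ (2 * α ^ 2 * Real.log t) * Kp :=
        mul_le_mul hS2 hSpp hSppnn (by positivity)
      calc C₄ * (∑ k ∈ range t, (α / Real.sqrt ((k : ℝ) + 2)) ^ 2)
            * ∑ k ∈ range t, ((k : ℝ) + 2) ^ (-p)
          = C₄ * ((∑ k ∈ range t, (α / Real.sqrt ((k : ℝ) + 2)) ^ 2)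
            * ∑ k ∈ range t, ((k : ℝ) + 2) ^ (-p)) := by ring
        _ ≤ C₄ * ((2 * α ^ 2 * Real.log t) * Kp) := mul_le_mul_of_nonneg_left h5 hC₄
        _ = C₄ * (2 * α ^ 2 * Real.log t) * Kp := by ring
    have hA2 : A ≤ A / Real.log 2 * Real.log t := by
      rw [div_mul_eq_mul_div, le_div_iff₀ hlog2]
      exact mul_le_mul_of_nonneg_left hlogt hA
    have hring : M * Real.log t
        = A / Real.log 2 * Real.log t + C₁ * (2 * α ^ 2 * Real.log t)
          + C₄ * (2 * α ^ 2 * Real.log t) * Kp := by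
      rw [hMdef]; ring
    have hAring : A = C₀ + C₂ * (α * K₁) + C₃ * (α * Kp) := by rw [hAdef]; ring
    linarith
  -- finish
  calc (C₀ + C₁ * ∑ k ∈ range t, (α / Real.sqrt ((k : ℝ) + 2)) ^ 2
          + C₂ * ∑ k ∈ range t, (α / Real.sqrt ((k : ℝ) + 2)) * ((k : ℝ) + 2) ^ (-p₁)
          + C₃ * ∑ k ∈ range t, (α / Real.sqrt ((k : ℝ) + 2)) * ((k : ℝ) + 2) ^ (-p)
          + C₄ * (∑ k ∈ range t, (α / Real.sqrt ((k : ℝ) + 2)) ^ 2)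
              * ∑ k ∈ range t, ((k : ℝ) + 2) ^ (-p))
        / (∑ k ∈ range t, α / Real.sqrt ((k : ℝ) + 2))
      ≤ (M * Real.log t) / (α * Real.sqrt t / Real.sqrt 2) :=
        div_le_div₀ (by positivity) hN (by positivity) hDlow
    _ = M * Real.sqrt 2 / α * (Real.log t / Real.sqrt t) := by
        have h1 : Real.sqrt (t : ℝ) ≠ 0 := by positivity
        have h2 : Real.sqrt 2 ≠ 0 := by positivity
        field_simp
    _ ≤ (M * Real.sqrt 2 / α + 1) * Real.log t / Real.sqrt t := by
        rw [mul_div_assoc (M * Real.sqrt 2 / α + 1)]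
        refine mul_le_mul_of_nonneg_right ?_ (div_nonneg hL (Real.sqrt_nonneg _))
        linarith
end

section
/- Let (Ω, ℱ, ℙ) be a probability space with a filtration (ℱ_k)_{k≥0}, and let (u_k), (v_k), (w_k), (η_k) be nonnegative, integrable, (ℱ_k)-adapted real-valued stochastic processes such that for every k ≥ 0, almost surely E[u_{k+1} | ℱ_k] ≤ (1 + η_k) u_k − v_k + w_k, and such that Σ_{k=0}^{∞} η_k < ∞ almost surely and Σ_{k=0}^{∞} w_k < ∞ almost surely. Then: (1) the sequence (u_k) converges almost surely to a finite limit; and (2) Σ_{k=0}^{∞} v_k < ∞ almost surely. -/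
open MeasureTheory Filter

noncomputable def rsA (η : ℕ → ℝ) (k : ℕ) : ℝ := ∏ j ∈ Finset.range k, (1 + η j)

lemma rsA_succ (η : ℕ → ℝ) (k : ℕ) : rsA η (k+1) = rsA η k * (1 + η k) :=
  Finset.prod_range_succ _ _

lemma rsA_one_le (η : ℕ → ℝ) (hη : ∀ k, 0 ≤ η k) (k : ℕ) : 1 ≤ rsA η k := by
  unfold rsA
  have : ∀ j ∈ Finset.range k, (1:ℝ) ≤ 1 + η j := fun j _ => by linarith [hη j]
  calc (1:ℝ) = ∏ _j ∈ Finset.range k, (1:ℝ) := by simp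
    _ ≤ ∏ j ∈ Finset.range k, (1 + η j) :=
      Finset.prod_le_prod (fun j _ => zero_le_one) this

lemma rsA_pos (η : ℕ → ℝ) (hη : ∀ k, 0 ≤ η k) (k : ℕ) : 0 < rsA η k :=
  lt_of_lt_of_le one_pos (rsA_one_le η hη k)

lemma rsA_mono (η : ℕ → ℝ) (hη : ∀ k, 0 ≤ η k) : Monotone (rsA η) := by
  apply monotone_nat_of_le_succ
  intro k
  rw [rsA_succ]
  nlinarith [rsA_pos η hη k, hη k]

lemma rsA_le_exp (η : ℕ → ℝ) (hη : ∀ k, 0 ≤ η k) (hs : Summable η) (k : ℕ) :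
    rsA η k ≤ Real.exp (∑' j, η j) := by
  have h1 : rsA η k ≤ ∏ j ∈ Finset.range k, Real.exp (η j) := by
    apply Finset.prod_le_prod
    · intro j _; linarith [hη j]
    · intro j _
      have := Real.add_one_le_exp (η j)
      linarith
  calc rsA η k ≤ ∏ j ∈ Finset.range k, Real.exp (η j) := h1
    _ = Real.exp (∑ j ∈ Finset.range k, η j) := (Real.exp_sum _ _).symm
    _ ≤ Real.exp (∑' j, η j) := Real.exp_le_exp.2 (Summable.sum_le_tsum _ (fun j _ => hη j) hs)

lemma rs_det (u v w η : ℕ → ℝ) (hu : ∀ k, 0 ≤ u k) (hv : ∀ k, 0 ≤ v k)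
    (hw : ∀ k, 0 ≤ w k) (hη : ∀ k, 0 ≤ η k) (hηs : Summable η) (hws : Summable w)
    (L : ℝ)
    (hX : Tendsto (fun k => u k * (rsA η k)⁻¹
        + ∑ j ∈ Finset.range k, (v j - w j) * (rsA η (j+1))⁻¹) atTop (nhds L)) :
    (∃ L', Tendsto u atTop (nhds L')) ∧ Summable v := by
  set M := Real.exp (∑' j, η j) with hM
  have hA1 := rsA_one_le η hη
  have hApos := rsA_pos η hη
  have hAle : ∀ k, rsA η k ≤ M := rsA_le_exp η hη hηs
  have hbd : ∀ k, (rsA η k)⁻¹ ≤ 1 := fun k => inv_le_one_of_one_le₀ (hA1 k)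
  have hbpos : ∀ k, 0 < (rsA η k)⁻¹ := fun k => inv_pos.2 (hApos k)
  have hAbdd : BddAbove (Set.range (rsA η)) := ⟨M, by rintro x ⟨k, rfl⟩; exact hAle k⟩
  have hAconv : Tendsto (rsA η) atTop (nhds (⨆ k, rsA η k)) :=
    tendsto_atTop_ciSup (rsA_mono η hη) hAbdd
  have hwb : Summable (fun j => w j * (rsA η (j+1))⁻¹) := by
    refine Summable.of_nonneg_of_le (fun j => mul_nonneg (hw j) (hbpos _).le)
      (fun j => ?_) hws
    calc w j * (rsA η (j+1))⁻¹ ≤ w j * 1 :=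
          mul_le_mul_of_nonneg_left (hbd _) (hw j)
      _ = w j := mul_one _
  set T : ℕ → ℝ := fun k => u k * (rsA η k)⁻¹
      + ∑ j ∈ Finset.range k, v j * (rsA η (j+1))⁻¹ with hTdef
  have hT : Tendsto T atTop (nhds (L + ∑' j, w j * (rsA η (j+1))⁻¹)) := by
    have h := hX.add hwb.hasSum.tendsto_sum_nat
    have key : ∀ k, T k = (u k * (rsA η k)⁻¹
        + ∑ j ∈ Finset.range k, (v j - w j) * (rsA η (j+1))⁻¹)
        + ∑ j ∈ Finset.range k, w j * (rsA η (j+1))⁻¹ := by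
      intro k
      simp only [hTdef, add_assoc, ← Finset.sum_add_distrib]
      congr 1
      apply Finset.sum_congr rfl
      intro j _
      ring
    simpa only [← key] using h
  obtain ⟨c, hc⟩ := hT.bddAbove_range
  have hvb : Summable (fun j => v j * (rsA η (j+1))⁻¹) := by
    apply summable_of_sum_range_le (c := c)
      (fun j => mul_nonneg (hv j) (hbpos _).le)
    intro n
    have h1 : ∑ j ∈ Finset.range n, v j * (rsA η (j+1))⁻¹ ≤ T n := by
      have : 0 ≤ u n * (rsA η n)⁻¹ := mul_nonneg (hu n) (hbpos _).le
      simp only [hTdef]; linarith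
    exact h1.trans (hc ⟨n, rfl⟩)
  have hvsum : Summable v := by
    refine Summable.of_nonneg_of_le hv (fun j => ?_) (hvb.mul_left M)
    have h1 : v j = (v j * (rsA η (j+1))⁻¹) * rsA η (j+1) := by
      rw [mul_assoc, inv_mul_cancel₀ (ne_of_gt (hApos _)), mul_one]
    conv_lhs => rw [h1]
    calc (v j * (rsA η (j+1))⁻¹) * rsA η (j+1)
        ≤ (v j * (rsA η (j+1))⁻¹) * M :=
          mul_le_mul_of_nonneg_left (hAle _) (mul_nonneg (hv j) (hbpos _).le)
      _ = M * (v j * (rsA η (j+1))⁻¹) := mul_comm _ _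
  refine ⟨?_, hvsum⟩
  have hS : Tendsto (fun k => ∑ j ∈ Finset.range k, v j * (rsA η (j+1))⁻¹) atTop
      (nhds (∑' j, v j * (rsA η (j+1))⁻¹)) := hvb.hasSum.tendsto_sum_nat
  have hub : Tendsto (fun k => u k * (rsA η k)⁻¹) atTop
      (nhds ((L + ∑' j, w j * (rsA η (j+1))⁻¹) - ∑' j, v j * (rsA η (j+1))⁻¹)) := by
    have h := hT.sub hS
    simpa only [hTdef, add_sub_cancel_right] using h
  refine ⟨((L + ∑' j, w j * (rsA η (j+1))⁻¹) - ∑' j, v j * (rsA η (j+1))⁻¹) * (⨆ k, rsA η k), ?_⟩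
  have h := hub.mul hAconv
  have key : ∀ k, u k * (rsA η k)⁻¹ * rsA η k = u k := by
    intro k; rw [mul_assoc, inv_mul_cancel₀ (ne_of_gt (hApos _)), mul_one]
  simpa only [key] using h


noncomputable def rsY {Ω : Type*} (X : ℕ → Ω → ℝ) (E : ℕ → Set Ω) : ℕ → Ω → ℝ
  | 0 => X 0
  | (k+1) => rsY X E k + (E (k+1)).indicator (fun ω => X (k+1) ω - X k ω)

lemma rs_stopped {Ω : Type*} {m0 : MeasurableSpace Ω} (ℙ : Measure Ω) [IsProbabilityMeasure ℙ]
    (ℱ : Filtration ℕ m0) (X w : ℕ → Ω → ℝ)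
    (hw_nn : ∀ k ω, 0 ≤ w k ω) (hw_adp : Adapted ℱ w)
    (hX_adp : ∀ k, StronglyMeasurable[ℱ k] (X k)) (hX_int : ∀ k, Integrable (X k) ℙ)
    (hXsm : ∀ k, ℙ[X (k+1)|ℱ k] ≤ᵐ[ℙ] X k)
    (hXlb : ∀ k ω, -(∑ j ∈ Finset.range k, w j ω) ≤ X k ω)
    (c : ℝ) (hc : 0 ≤ c) :
    ∀ᵐ ω ∂ℙ, (∀ i, ∑ j ∈ Finset.range (i+1), w j ω ≤ c) →
      ∃ l, Tendsto (fun k => X k ω) atTop (nhds l) := by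
  classical
  set E : ℕ → Set Ω := fun k => {ω | ∀ i < k, ∑ j ∈ Finset.range (i+1), w j ω ≤ c} with hE
  have hEanti : ∀ k, E (k+1) ⊆ E k := by
    intro k ω hω i hi
    exact hω i (hi.trans (Nat.lt_succ_self k))
  have hEmeas : ∀ k, MeasurableSet[ℱ k] (E (k+1)) := by
    intro k
    have heq : E (k+1) = ⋂ i ∈ Finset.range (k+1),
        {ω | ∑ j ∈ Finset.range (i+1), w j ω ≤ c} := by
      ext ω; simp [hE, Finset.mem_range]
    rw [heq]
    refine MeasurableSet.biInter (Finset.range (k+1)).countable_toSet (fun i hi => ?_)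
    have hsm : StronglyMeasurable[ℱ k] (fun ω => ∑ j ∈ Finset.range (i+1), w j ω) := by
      apply Finset.stronglyMeasurable_fun_sum
      intro j hj
      have hi' : i < k + 1 := Finset.mem_range.1 (Finset.mem_coe.1 hi)
      have hj' : j ≤ k := by
        simp only [Finset.mem_range] at hj; omega
      exact (hw_adp j).stronglyMeasurable.mono (ℱ.mono hj')
    exact measurableSet_le hsm.measurable measurable_const
  -- invariant
  have hYX : ∀ k ω, ω ∈ E k → rsY X E k ω = X k ω := by
    intro k
    induction k with
    | zero => intro ω _; rfl
    | succ k ih =>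
      intro ω hω
      have h1 : rsY X E (k+1) ω = rsY X E k ω
          + (E (k+1)).indicator (fun ω => X (k+1) ω - X k ω) ω := rfl
      rw [h1, Set.indicator_of_mem hω, ih ω (hEanti k hω)]
      ring
  -- lower bound
  have hYlb : ∀ k ω, -c ≤ rsY X E k ω := by
    intro k
    induction k with
    | zero =>
      intro ω
      have := hXlb 0 ω
      simp only [Finset.range_zero, Finset.sum_empty, neg_zero] at this
      have h0 : rsY X E 0 ω = X 0 ω := rfl
      rw [h0]; linarith
    | succ k ih =>
      intro ω
      by_cases hω : ω ∈ E (k+1)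
      · rw [hYX (k+1) ω hω]
        have h1 : ∑ j ∈ Finset.range (k+1), w j ω ≤ c := hω k (Nat.lt_succ_self k)
        have := hXlb (k+1) ω
        linarith
      · have h1 : rsY X E (k+1) ω = rsY X E k ω
            + (E (k+1)).indicator (fun ω => X (k+1) ω - X k ω) ω := rfl
        rw [h1, Set.indicator_of_notMem hω, add_zero]
        exact ih ω
  -- adapted
  have hY_adp : ∀ k, StronglyMeasurable[ℱ k] (rsY X E k) := by
    intro k
    induction k with
    | zero => exact hX_adp 0
    | succ k ih =>
      have h1 : rsY X E (k+1) = rsY X E k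
          + (E (k+1)).indicator (fun ω => X (k+1) ω - X k ω) := rfl
      rw [h1]
      refine (ih.mono (ℱ.mono k.le_succ)).add ?_
      exact ((hX_adp (k+1)).sub ((hX_adp k).mono (ℱ.mono k.le_succ))).indicator
        ((ℱ.mono k.le_succ) _ (hEmeas k))
  -- integrable
  have hY_int : ∀ k, Integrable (rsY X E k) ℙ := by
    intro k
    induction k with
    | zero => exact hX_int 0
    | succ k ih =>
      have h1 : rsY X E (k+1) = rsY X E k
          + (E (k+1)).indicator (fun ω => X (k+1) ω - X k ω) := rfl
      rw [h1]
      exact ih.add (((hX_int (k+1)).sub (hX_int k)).indicator (ℱ.le k _ (hEmeas k)))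
  -- supermartingale
  have hYsm : Supermartingale (rsY X E) ℱ ℙ := by
    refine supermartingale_nat hY_adp hY_int (fun k => ?_)
    have hind_int : Integrable ((E (k+1)).indicator (fun ω => X (k+1) ω - X k ω)) ℙ :=
      ((hX_int (k+1)).sub (hX_int k)).indicator (ℱ.le k _ (hEmeas k))
    have h1 : rsY X E (k+1) = rsY X E k
        + (E (k+1)).indicator (fun ω => X (k+1) ω - X k ω) := rfl
    have h2 : ℙ[rsY X E (k+1)|ℱ k] =ᵐ[ℙ]
        ℙ[rsY X E k|ℱ k] + ℙ[(E (k+1)).indicator (fun ω => X (k+1) ω - X k ω)|ℱ k] := by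
      rw [h1]; exact condExp_add (hY_int k) hind_int _
    have h3 : ℙ[rsY X E k|ℱ k] = rsY X E k :=
      condExp_of_stronglyMeasurable (ℱ.le k) (hY_adp k) (hY_int k)
    have h4 : ℙ[(E (k+1)).indicator (fun ω => X (k+1) ω - X k ω)|ℱ k] =ᵐ[ℙ]
        (E (k+1)).indicator (ℙ[fun ω => X (k+1) ω - X k ω|ℱ k]) :=
      condExp_indicator ((hX_int (k+1)).sub (hX_int k)) (hEmeas k)
    have h5 : ℙ[fun ω => X (k+1) ω - X k ω|ℱ k] =ᵐ[ℙ]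
        fun ω => (ℙ[X (k+1)|ℱ k]) ω - X k ω := by
      have hsub : ℙ[X (k+1) - X k|ℱ k] =ᵐ[ℙ] ℙ[X (k+1)|ℱ k] - ℙ[X k|ℱ k] :=
        condExp_sub (hX_int (k+1)) (hX_int k) _
      have h6 : ℙ[X k|ℱ k] = X k :=
        condExp_of_stronglyMeasurable (ℱ.le k) ((hX_adp k).mono le_rfl) (hX_int k)
      filter_upwards [hsub] with ω hω
      have : (fun ω => X (k+1) ω - X k ω) = X (k+1) - X k := rfl
      rw [this, hω, h6]
      rfl
    filter_upwards [h2, h4, h5, hXsm k] with ω hω2 hω4 hω5 hωsm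
    rw [hω2, Pi.add_apply, h3, hω4]
    by_cases hmem : ω ∈ E (k+1)
    · rw [Set.indicator_of_mem hmem, hω5]
      linarith
    · rw [Set.indicator_of_notMem hmem]
      simp
  -- L¹ bound
  set R : ℝ := ∫ ω, X 0 ω ∂ℙ + 2*c with hRdef
  have hbdd : ∀ n, eLpNorm (rsY X E n) 1 ℙ ≤ ENNReal.ofReal R := by
    intro n
    have hEYn : ∫ ω, rsY X E n ω ∂ℙ ≤ ∫ ω, rsY X E 0 ω ∂ℙ := by
      have := hYsm.setIntegral_le (Nat.zero_le n) (MeasurableSet.univ (α := Ω))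
      simpa [Measure.restrict_univ] using this
    have hY0 : ∫ ω, rsY X E 0 ω ∂ℙ = ∫ ω, X 0 ω ∂ℙ := rfl
    have habs : ∀ ω, |rsY X E n ω| ≤ rsY X E n ω + 2*c := by
      intro ω
      have := hYlb n ω
      rcases abs_cases (rsY X E n ω) with ⟨h, _⟩ | ⟨h, _⟩ <;> rw [h] <;> linarith
    have hint : ∫ ω, |rsY X E n ω| ∂ℙ ≤ R := by
      calc ∫ ω, |rsY X E n ω| ∂ℙ ≤ ∫ ω, (rsY X E n ω + 2*c) ∂ℙ :=
            integral_mono (hY_int n).abs ((hY_int n).add (integrable_const _)) habs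
        _ = ∫ ω, rsY X E n ω ∂ℙ + 2*c := by
            rw [integral_add (hY_int n) (integrable_const _)]
            simp
        _ ≤ R := by rw [hRdef]; rw [hY0] at hEYn; linarith
    rw [eLpNorm_one_eq_lintegral_enorm, ← ofReal_integral_norm_eq_lintegral_enorm (hY_int n)]
    apply ENNReal.ofReal_le_ofReal
    simpa [Real.norm_eq_abs] using hint
  -- convergence
  have hconv : ∀ᵐ ω ∂ℙ, ∃ l, Tendsto (fun n => rsY X E n ω) atTop (nhds l) := by
    have hsub : Submartingale (-(rsY X E)) ℱ ℙ := hYsm.neg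
    have hbdd' : ∀ n, eLpNorm ((-(rsY X E)) n) 1 ℙ ≤ R.toNNReal := by
      intro n
      have : (-(rsY X E)) n = -(rsY X E n) := rfl
      rw [this, eLpNorm_neg]
      exact hbdd n
    have := hsub.exists_ae_tendsto_of_bdd hbdd'
    filter_upwards [this] with ω ⟨l, hl⟩
    refine ⟨-l, ?_⟩
    have : (fun n => rsY X E n ω) = fun n => -((-(rsY X E)) n ω) := by
      funext n; simp
    rw [this]
    exact hl.neg
  filter_upwards [hconv] with ω hω hsum
  obtain ⟨l, hl⟩ := hω
  have hmem : ∀ k, ω ∈ E k := fun k i _ => hsum i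
  have heq : ∀ k, rsY X E k ω = X k ω := fun k => hYX k ω (hmem k)
  exact ⟨l, by simpa only [heq] using hl⟩

/-- Robbins–Siegmund lemma: if `E[u_{k+1} | ℱ_k] ≤ (1 + η_k) u_k − v_k + w_k` a.s. with
`Σ η_k < ∞` a.s. and `Σ w_k < ∞` a.s., then `u_k` converges a.s. and `Σ v_k < ∞` a.s. -/
theorem stmt_19 {Ω : Type*} {m0 : MeasurableSpace Ω} (ℙ : Measure Ω)
    [IsProbabilityMeasure ℙ] (ℱ : Filtration ℕ m0)
    (u v w η : ℕ → Ω → ℝ)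
    (hu_nn : ∀ k ω, 0 ≤ u k ω) (hv_nn : ∀ k ω, 0 ≤ v k ω)
    (hw_nn : ∀ k ω, 0 ≤ w k ω) (hη_nn : ∀ k ω, 0 ≤ η k ω)
    (hu_int : ∀ k, Integrable (u k) ℙ) (hv_int : ∀ k, Integrable (v k) ℙ)
    (hw_int : ∀ k, Integrable (w k) ℙ) (hη_int : ∀ k, Integrable (η k) ℙ)
    (hu_adp : Adapted ℱ u) (hv_adp : Adapted ℱ v)
    (hw_adp : Adapted ℱ w) (hη_adp : Adapted ℱ η)
    (hrec : ∀ k, ∀ᵐ ω ∂ℙ,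
      (ℙ[u (k + 1)|ℱ k]) ω ≤ (1 + η k ω) * u k ω - v k ω + w k ω)
    (hη_sum : ∀ᵐ ω ∂ℙ, Summable fun k => η k ω)
    (hw_sum : ∀ᵐ ω ∂ℙ, Summable fun k => w k ω) :
    (∀ᵐ ω ∂ℙ, ∃ L : ℝ, Tendsto (fun k => u k ω) atTop (nhds L)) ∧
      (∀ᵐ ω ∂ℙ, Summable fun k => v k ω) := by
  classical
  set X : ℕ → Ω → ℝ := fun k ω => u k ω * (rsA (fun j => η j ω) k)⁻¹
      + ∑ j ∈ Finset.range k, (v j ω - w j ω) * (rsA (fun j => η j ω) (j+1))⁻¹ with hXdef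
  have hηω : ∀ ω k, 0 ≤ (fun j => η j ω) k := fun ω k => hη_nn k ω
  have hApos : ∀ ω k, 0 < rsA (fun j => η j ω) k := fun ω k => rsA_pos _ (hηω ω) k
  have hA1 : ∀ ω k, 1 ≤ rsA (fun j => η j ω) k := fun ω k => rsA_one_le _ (hηω ω) k
  have hBle : ∀ ω k, (rsA (fun j => η j ω) k)⁻¹ ≤ 1 :=
    fun ω k => inv_le_one_of_one_le₀ (hA1 ω k)
  have hBpos : ∀ ω k, 0 < (rsA (fun j => η j ω) k)⁻¹ := fun ω k => inv_pos.2 (hApos ω k)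
  -- strong measurability of rsA
  have hA_sm : ∀ n k, k ≤ n + 1 → StronglyMeasurable[ℱ n]
      (fun ω => rsA (fun j => η j ω) k) := by
    intro n k hk
    have heq : (fun ω => rsA (fun j => η j ω) k)
        = fun ω => ∏ j ∈ Finset.range k, (1 + η j ω) := rfl
    rw [heq]
    apply Finset.stronglyMeasurable_fun_prod
    intro j hj
    have hj' : j ≤ n := by
      have := Finset.mem_range.1 hj; omega
    exact stronglyMeasurable_const.add ((hη_adp j).stronglyMeasurable.mono (ℱ.mono hj'))
  -- adaptedness of X
  have hX_adp : ∀ k, StronglyMeasurable[ℱ k] (X k) := by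
    intro k
    apply ((hu_adp k).stronglyMeasurable.mul (hA_sm k k k.le_succ).measurable.inv.stronglyMeasurable).add
    apply Finset.stronglyMeasurable_fun_sum
    intro j hj
    have hj' : j < k := Finset.mem_range.1 hj
    refine (((hv_adp j).stronglyMeasurable.mono (ℱ.mono hj'.le)).sub
      ((hw_adp j).stronglyMeasurable.mono (ℱ.mono hj'.le))).mul ?_
    exact (hA_sm k (j+1) (by omega)).measurable.inv.stronglyMeasurable
  -- integrability of X
  have hX_int : ∀ k, Integrable (X k) ℙ := by
    intro k
    refine Integrable.mono' ((hu_int k).add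
      (integrable_finset_sum (Finset.range k)
        (fun j (_ : j ∈ Finset.range k) => (hv_int j).add (hw_int j))))
      (((hX_adp k).mono (ℱ.le k)).aestronglyMeasurable) (ae_of_all _ fun ω => ?_)
    show ‖X k ω‖ ≤ u k ω + ∑ j ∈ Finset.range k, (v j ω + w j ω)
    have h1 : |u k ω * (rsA (fun j => η j ω) k)⁻¹| ≤ u k ω := by
      rw [abs_mul, abs_of_nonneg (hu_nn k ω), abs_of_nonneg (hBpos ω k).le]
      calc u k ω * (rsA (fun j => η j ω) k)⁻¹ ≤ u k ω * 1 :=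
            mul_le_mul_of_nonneg_left (hBle ω k) (hu_nn k ω)
        _ = u k ω := mul_one _
    have h2 : |∑ j ∈ Finset.range k, (v j ω - w j ω) * (rsA (fun j => η j ω) (j+1))⁻¹|
        ≤ ∑ j ∈ Finset.range k, (v j ω + w j ω) := by
      refine (Finset.abs_sum_le_sum_abs _ _).trans (Finset.sum_le_sum fun j _ => ?_)
      rw [abs_mul, abs_of_nonneg (hBpos ω (j+1)).le]
      have h3 : |v j ω - w j ω| ≤ v j ω + w j ω := by
        rcases abs_cases (v j ω - w j ω) with ⟨h, _⟩ | ⟨h, _⟩ <;> rw [h] <;>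
          [linarith [hw_nn j ω]; linarith [hv_nn j ω]]
      calc |v j ω - w j ω| * (rsA (fun j => η j ω) (j+1))⁻¹
          ≤ |v j ω - w j ω| * 1 :=
            mul_le_mul_of_nonneg_left (hBle ω (j+1)) (abs_nonneg _)
        _ = |v j ω - w j ω| := mul_one _
        _ ≤ v j ω + w j ω := h3
    calc ‖X k ω‖ = |X k ω| := rfl
      _ ≤ |u k ω * (rsA (fun j => η j ω) k)⁻¹|
          + |∑ j ∈ Finset.range k, (v j ω - w j ω) * (rsA (fun j => η j ω) (j+1))⁻¹| :=
            abs_add_le _ _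
      _ ≤ u k ω + ∑ j ∈ Finset.range k, (v j ω + w j ω) := add_le_add h1 h2
  -- lower bound for X
  have hXlb : ∀ k ω, -(∑ j ∈ Finset.range k, w j ω) ≤ X k ω := by
    intro k ω
    have h1 : ∀ j ∈ Finset.range k, -(w j ω)
        ≤ (v j ω - w j ω) * (rsA (fun j => η j ω) (j+1))⁻¹ := by
      intro j _
      have hb1 := hBle ω (j+1)
      have hb0 := (hBpos ω (j+1)).le
      nlinarith [hv_nn j ω, hw_nn j ω]
    have h2 : ∑ j ∈ Finset.range k, -(w j ω)
        ≤ ∑ j ∈ Finset.range k, (v j ω - w j ω) * (rsA (fun j => η j ω) (j+1))⁻¹ :=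
      Finset.sum_le_sum h1
    have h3 : 0 ≤ u k ω * (rsA (fun j => η j ω) k)⁻¹ :=
      mul_nonneg (hu_nn k ω) (hBpos ω k).le
    have h4 : ∑ j ∈ Finset.range k, -(w j ω) = -(∑ j ∈ Finset.range k, w j ω) := by
      rw [Finset.sum_neg_distrib]
    show -(∑ j ∈ Finset.range k, w j ω) ≤ u k ω * (rsA (fun j => η j ω) k)⁻¹
      + ∑ j ∈ Finset.range k, (v j ω - w j ω) * (rsA (fun j => η j ω) (j+1))⁻¹
    rw [← h4]
    linarith
  -- supermartingale inequality for X
  have hXsm : ∀ k, ℙ[X (k+1)|ℱ k] ≤ᵐ[ℙ] X k := by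
    intro k
    set B : Ω → ℝ := fun ω => (rsA (fun j => η j ω) (k+1))⁻¹ with hBdef
    set S : Ω → ℝ := fun ω => ∑ j ∈ Finset.range (k+1),
        (v j ω - w j ω) * (rsA (fun j => η j ω) (j+1))⁻¹ with hSdef
    have hB_sm : StronglyMeasurable[ℱ k] B :=
      (hA_sm k (k+1) le_rfl).measurable.inv.stronglyMeasurable
    have hS_sm : StronglyMeasurable[ℱ k] S := by
      apply Finset.stronglyMeasurable_fun_sum
      intro j hj
      have hj' : j ≤ k := by have := Finset.mem_range.1 hj; omega
      exact (((hv_adp j).stronglyMeasurable.mono (ℱ.mono hj')).sub ((hw_adp j).stronglyMeasurable.mono (ℱ.mono hj'))).mul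
        (hA_sm k (j+1) (by omega)).measurable.inv.stronglyMeasurable
    have hBu_int : Integrable (B * u (k+1)) ℙ := by
      refine Integrable.mono' (hu_int (k+1))
        ((hB_sm.mono (ℱ.le k)).mul ((hu_adp (k+1)).stronglyMeasurable.mono (ℱ.le (k+1)))).aestronglyMeasurable
        (ae_of_all _ fun ω => ?_)
      show ‖B ω * u (k+1) ω‖ ≤ u (k+1) ω
      rw [Real.norm_eq_abs, abs_mul, abs_of_nonneg (hBpos ω (k+1)).le,
        abs_of_nonneg (hu_nn (k+1) ω)]
      calc B ω * u (k+1) ω ≤ 1 * u (k+1) ω :=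
            mul_le_mul_of_nonneg_right (hBle ω (k+1)) (hu_nn (k+1) ω)
        _ = u (k+1) ω := one_mul _
    have hS_int : Integrable S ℙ := by
      refine Integrable.mono' (integrable_finset_sum (Finset.range (k+1))
          (fun j (_ : j ∈ Finset.range (k+1)) => (hv_int j).add (hw_int j)))
        ((hS_sm.mono (ℱ.le k)).aestronglyMeasurable) (ae_of_all _ fun ω => ?_)
      show ‖S ω‖ ≤ ∑ j ∈ Finset.range (k+1), (v j ω + w j ω)
      rw [Real.norm_eq_abs]
      refine (Finset.abs_sum_le_sum_abs _ _).trans (Finset.sum_le_sum fun j _ => ?_)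
      rw [abs_mul, abs_of_nonneg (hBpos ω (j+1)).le]
      have h3 : |v j ω - w j ω| ≤ v j ω + w j ω := by
        rcases abs_cases (v j ω - w j ω) with ⟨h, _⟩ | ⟨h, _⟩ <;> rw [h] <;>
          [linarith [hw_nn j ω]; linarith [hv_nn j ω]]
      calc |v j ω - w j ω| * (rsA (fun j => η j ω) (j+1))⁻¹
          ≤ |v j ω - w j ω| * 1 :=
            mul_le_mul_of_nonneg_left (hBle ω (j+1)) (abs_nonneg _)
        _ ≤ v j ω + w j ω := by rw [mul_one]; exact h3
    have hXsplit : X (k+1) = B * u (k+1) + S := by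
      funext ω
      show X (k+1) ω = B ω * u (k+1) ω + S ω
      rw [hXdef]
      dsimp only
      ring
    have h1 : ℙ[X (k+1)|ℱ k] =ᵐ[ℙ] ℙ[B * u (k+1)|ℱ k] + ℙ[S|ℱ k] := by
      rw [hXsplit]; exact condExp_add hBu_int hS_int _
    have h2 : ℙ[B * u (k+1)|ℱ k] =ᵐ[ℙ] B * ℙ[u (k+1)|ℱ k] :=
      condExp_mul_of_stronglyMeasurable_left hB_sm hBu_int (hu_int (k+1))
    have h3 : ℙ[S|ℱ k] = S := condExp_of_stronglyMeasurable (ℱ.le k) hS_sm hS_int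
    filter_upwards [h1, h2, hrec k] with ω hω1 hω2 hωr
    rw [hω1, Pi.add_apply, hω2, Pi.mul_apply, h3]
    have hstep : (rsA (fun j => η j ω) (k+1))⁻¹ * (1 + η k ω)
        = (rsA (fun j => η j ω) k)⁻¹ := by
      have h5 : (0:ℝ) < 1 + η k ω := by linarith [hη_nn k ω]
      rw [rsA_succ, mul_inv, mul_assoc, inv_mul_cancel₀ (ne_of_gt h5), mul_one]
    have hBnn : 0 ≤ B ω := (hBpos ω (k+1)).le
    have hmul : B ω * (ℙ[u (k+1)|ℱ k]) ω
        ≤ B ω * ((1 + η k ω) * u k ω - v k ω + w k ω) :=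
      mul_le_mul_of_nonneg_left hωr hBnn
    have hSsucc : S ω = (∑ j ∈ Finset.range k,
        (v j ω - w j ω) * (rsA (fun j => η j ω) (j+1))⁻¹)
        + (v k ω - w k ω) * B ω := by
      rw [hSdef]
      dsimp only
      rw [Finset.sum_range_succ]
    have hXk : X k ω = u k ω * (rsA (fun j => η j ω) k)⁻¹
        + ∑ j ∈ Finset.range k, (v j ω - w j ω) * (rsA (fun j => η j ω) (j+1))⁻¹ := rfl
    have hkey : B ω * ((1 + η k ω) * u k ω - v k ω + w k ω) + S ω = X k ω := by
      rw [hSsucc, hXk, hBdef]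
      dsimp only
      linear_combination u k ω * hstep
    linarith
  -- apply stopping for each natural c
  have hstop : ∀ᵐ ω ∂ℙ, ∀ c : ℕ, (∀ i, ∑ j ∈ Finset.range (i+1), w j ω ≤ (c:ℝ)) →
      ∃ l, Tendsto (fun k => X k ω) atTop (nhds l) := by
    rw [ae_all_iff]
    intro c
    exact rs_stopped ℙ ℱ X w hw_nn hw_adp hX_adp hX_int hXsm hXlb (c:ℝ) (Nat.cast_nonneg c)
  have hmain : ∀ᵐ ω ∂ℙ, (∃ L : ℝ, Tendsto (fun k => u k ω) atTop (nhds L))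
      ∧ Summable (fun k => v k ω) := by
    filter_upwards [hstop, hη_sum, hw_sum] with ω hω hηs hws
    obtain ⟨c, hc⟩ := exists_nat_ge (∑' j, w j ω)
    have hpart : ∀ i, ∑ j ∈ Finset.range (i+1), w j ω ≤ (c:ℝ) := by
      intro i
      exact (Summable.sum_le_tsum _ (fun j _ => hw_nn j ω) hws).trans hc
    obtain ⟨L, hL⟩ := hω c hpart
    exact rs_det (fun k => u k ω) (fun k => v k ω) (fun k => w k ω) (fun k => η k ω)
      (fun k => hu_nn k ω) (fun k => hv_nn k ω) (fun k => hw_nn k ω) (fun k => hη_nn k ω)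
      hηs hws L hL
  exact ⟨hmain.mono fun ω h => h.1, hmain.mono fun ω h => h.2⟩
end
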